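/- arXiv:math/0008171 — 10 statements merged into one kernel-verified Lean document; each statement's English description precedes it below -/
import Mathlib

section
/- Let A be an n × n matrix with integer entries (n ≥ 1) and let λ ∈ ℝ be an eigenvalue of A over ℝ, i.e., there exists a nonzero row vector v : Fin n → ℝ with v ᵥ* A = λ • v (after casting A entrywise to ℝ). Then there exists a nonzero row vector r : Fin n → ℝ with r ᵥ* A = λ • r such that every entry r i lies in ℤ[λ] = Algebra.adjoin ℤ ({λ} : Set ℝ), i.e., each entry is an integer-coefficient polynomial expression in λ. (Lemma 4: the left Perron eigenvector of the substitution matrix can be chosen with entries that are integer polynomials in λ.) -/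
private lemma vecMul_smul_one {n : ℕ} (u : Fin n → ℝ) (c : ℝ) :
    Matrix.vecMul u (c • (1 : Matrix (Fin n) (Fin n) ℝ)) = c • u := by
  ext i
  simp only [Matrix.vecMul, dotProduct, Matrix.smul_apply, Matrix.one_apply,
    smul_eq_mul, mul_ite, mul_one, mul_zero, Finset.sum_ite_eq', Finset.mem_univ, if_true,
    Pi.smul_apply]
  ring

theorem stmt0 (n : ℕ) (hn : 1 ≤ n) (A : Matrix (Fin n) (Fin n) ℤ) (lam : ℝ)
    (v : Fin n → ℝ) (hv : v ≠ 0)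
    (hev : Matrix.vecMul v (A.map (Int.cast : ℤ → ℝ)) = lam • v) :
    ∃ r : Fin n → ℝ, r ≠ 0 ∧
      Matrix.vecMul r (A.map (Int.cast : ℤ → ℝ)) = lam • r ∧
      ∀ i, r i ∈ Algebra.adjoin ℤ ({lam} : Set ℝ) := by
  set R := Algebra.adjoin ℤ ({lam} : Set ℝ) with hR
  set M : Matrix (Fin n) (Fin n) ℝ := A.map (Int.cast : ℤ → ℝ) - lam • 1 with hM
  have hvM : Matrix.vecMul v M = 0 := by
    rw [hM, Matrix.vecMul_sub, hev, vecMul_smul_one, sub_self]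
  have hdetM : M.det = 0 := Matrix.exists_vecMul_eq_zero_iff.mp ⟨v, hv, hvM⟩
  have hlam : lam ∈ R := Algebra.self_mem_adjoin_singleton ℤ lam
  have hmem : ∀ i j, M i j ∈ R := by
    intro i j
    rw [hM]
    simp only [Matrix.sub_apply, Matrix.map_apply, Matrix.smul_apply, Matrix.one_apply,
      smul_eq_mul]
    refine sub_mem ?_ ?_
    · have : ((A i j : ℤ) : ℝ) = algebraMap ℤ ℝ (A i j) := by simp
      rw [this]
      exact Subalgebra.algebraMap_mem R (A i j)
    · by_cases h : i = j <;> simp only [h, if_true, if_false, mul_one, mul_zero]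
      exacts [hlam, zero_mem R]
  set N : Matrix (Fin n) (Fin n) R := fun i j => ⟨M i j, hmem i j⟩ with hN
  have hmap : N.map (algebraMap R ℝ) = M := by
    ext i j; rfl
  have hdetN : N.det = 0 := by
    have h1 : (algebraMap R ℝ) N.det = (N.map (algebraMap R ℝ)).det :=
      RingHom.map_det (algebraMap R ℝ) N
    rw [hmap, hdetM] at h1
    exact Subtype.ext h1
  obtain ⟨w, hw0, hwN⟩ := Matrix.exists_vecMul_eq_zero_iff.mpr hdetN
  refine ⟨fun i => (w i : ℝ), ?_, ?_, fun i => (w i).2⟩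
  · intro h
    apply hw0
    ext i
    have := congrFun h i
    simpa using this
  · have hrM : Matrix.vecMul (fun i => (w i : ℝ)) M = 0 := by
      ext j
      have := congrFun hwN j
      have h2 : ((Matrix.vecMul w N j : R) : ℝ) = 0 := by rw [this]; rfl
      simpa [Matrix.vecMul, dotProduct, hN] using h2
    rw [hM, Matrix.vecMul_sub, vecMul_smul_one, sub_eq_zero] at hrM
    exact hrM
end

section
/- Let A be an n × n matrix with integer entries and let λ ∈ ℝ be a nonzero eigenvalue of A over ℝ, i.e., there exists a nonzero row vector v : Fin n → ℝ with v ᵥ* A = λ • v (after casting A entrywise to ℝ). Then there exists a nonzero row vector r : Fin n → ℝ with r ᵥ* A = λ • r such that every entry r i lies in ℤ[1/λ] = Algebra.adjoin ℤ ({λ⁻¹} : Set ℝ). (The paper's 'Noninteger Case' normalization following Lemma 4: rescaling the ℤ[λ]-eigenvector by λ^{-p} puts its entries in ℤ[1/λ].) -/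
open Polynomial Matrix

lemma mem_adjoin_inv_of_root (lam : ℝ) (hlam : lam ≠ 0) (p : Polynomial ℤ)
    (hm : p.Monic) (hroot : Polynomial.aeval lam p = 0) :
    lam ∈ Algebra.adjoin ℤ ({lam⁻¹} : Set ℝ) := by
  set d := p.natDegree with hd
  have hd1 : 0 < d := by
    rcases Nat.eq_zero_or_pos d with h | h
    · exfalso
      have := (Polynomial.Monic.natDegree_eq_zero hm).mp h
      rw [this] at hroot
      simp at hroot
    · exact h
  have hsum : Polynomial.aeval lam p
      = ∑ i ∈ Finset.range (d + 1), (p.coeff i : ℝ) * lam ^ i := by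
    rw [Polynomial.aeval_eq_sum_range]
    exact Finset.sum_congr rfl fun i _ => by rw [zsmul_eq_mul]
  have hcd : (p.coeff d : ℝ) = 1 := by rw [hm.coeff_natDegree]; norm_num
  have key : lam ^ d = -∑ i ∈ Finset.range d, (p.coeff i : ℝ) * lam ^ i := by
    have h0 := hroot
    rw [hsum, Finset.sum_range_succ, hcd, one_mul] at h0
    linarith [h0]
  have hpow : lam ^ (d - 1) ≠ 0 := pow_ne_zero _ hlam
  have hrep : lam = ∑ i ∈ Finset.range d, (-(p.coeff i : ℝ)) * (lam⁻¹) ^ (d - 1 - i) := by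
    apply mul_right_cancel₀ hpow
    have h1 : lam * lam ^ (d - 1) = lam ^ d := by
      rw [← pow_succ']
      congr 1
      omega
    rw [h1, key, Finset.sum_mul, ← Finset.sum_neg_distrib]
    refine Finset.sum_congr rfl fun i hi => ?_
    have hi' : i ≤ d - 1 := by have := Finset.mem_range.mp hi; omega
    have h2 : (lam⁻¹) ^ (d - 1 - i) = (lam⁻¹) ^ (d - 1) * lam ^ i := by
      rw [pow_sub₀ lam⁻¹ (inv_ne_zero hlam) hi']
      simp only [inv_pow, inv_inv]
    rw [h2]
    have hc : (lam ^ (d - 1))⁻¹ * lam ^ (d - 1) = 1 := inv_mul_cancel₀ hpow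
    calc -((p.coeff i : ℝ) * lam ^ i)
        = -(p.coeff i : ℝ) * lam ^ i * ((lam ^ (d - 1))⁻¹ * lam ^ (d - 1)) := by
          rw [hc]; ring
      _ = -(p.coeff i : ℝ) * (lam⁻¹ ^ (d - 1) * lam ^ i) * lam ^ (d - 1) := by
          rw [inv_pow]; ring
  have hmem : (∑ i ∈ Finset.range d, (-(p.coeff i : ℝ)) * (lam⁻¹) ^ (d - 1 - i))
      ∈ Algebra.adjoin ℤ ({lam⁻¹} : Set ℝ) := by
    refine Subalgebra.sum_mem _ fun i _ => ?_
    refine Subalgebra.mul_mem _ (Subalgebra.neg_mem _ (Subalgebra.intCast_mem _ _)) ?_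
    exact Subalgebra.pow_mem _ (Algebra.subset_adjoin (Set.mem_singleton _)) _
  rw [← hrep] at hmem
  exact hmem

theorem stmt1 (n : ℕ) (A : Matrix (Fin n) (Fin n) ℤ) (lam : ℝ) (hlam : lam ≠ 0)
    (v : Fin n → ℝ) (hv : v ≠ 0)
    (hev : Matrix.vecMul v (A.map (Int.cast : ℤ → ℝ)) = lam • v) :
    ∃ r : Fin n → ℝ, r ≠ 0 ∧
      Matrix.vecMul r (A.map (Int.cast : ℤ → ℝ)) = lam • r ∧
      ∀ i, r i ∈ Algebra.adjoin ℤ ({lam⁻¹} : Set ℝ) := by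
  set Aℝ : Matrix (Fin n) (Fin n) ℝ := A.map (Int.cast : ℤ → ℝ) with hAℝ
  have hsmul1 : ∀ u : Fin n → ℝ, Matrix.vecMul u (lam • (1 : Matrix (Fin n) (Fin n) ℝ))
      = lam • u := by
    intro u
    funext j
    simp [Matrix.vecMul, dotProduct, Matrix.smul_apply, Matrix.one_apply,
      Finset.sum_ite_eq, mul_ite, mul_comm]
  have hker : Matrix.vecMul v (Aℝ - lam • 1) = 0 := by
    rw [Matrix.vecMul_sub, hev, hsmul1, sub_self]
  have hdet : (Aℝ - lam • (1 : Matrix (Fin n) (Fin n) ℝ)).det = 0 :=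
    (Matrix.exists_vecMul_eq_zero_iff).mp ⟨v, hv, hker⟩
  have hroot : Polynomial.aeval lam A.charpoly = 0 := by
    have h1 : (Aℝ.charpoly).eval lam = (lam • (1 : Matrix (Fin n) (Fin n) ℝ) - Aℝ).det := by
      rw [Matrix.charpoly, eval_det, matPolyEquiv_charmatrix]
      simp [Matrix.scalar, smul_eq_diagonal_mul, Pi.algebraMap_def, Algebra.algebraMap_self_apply]
    have h2 : (lam • (1 : Matrix (Fin n) (Fin n) ℝ) - Aℝ).det = 0 := by
      rw [(neg_sub Aℝ (lam • 1)).symm, Matrix.det_neg, hdet, mul_zero]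
    have h3 : Aℝ.charpoly = A.charpoly.map (Int.castRingHom ℝ) :=
      Matrix.charpoly_map A (Int.castRingHom ℝ)
    rw [Polynomial.aeval_def, ← Polynomial.eval_map, algebraMap_int_eq, ← h3, h1, h2]
  have hlamS : lam ∈ Algebra.adjoin ℤ ({lam⁻¹} : Set ℝ) :=
    mem_adjoin_inv_of_root lam hlam A.charpoly A.charpoly_monic hroot
  set S := Algebra.adjoin ℤ ({lam⁻¹} : Set ℝ) with hS
  set lamS : S := ⟨lam, hlamS⟩ with hlamSdef
  set M : Matrix (Fin n) (Fin n) S :=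
    A.map (algebraMap ℤ S) - Matrix.diagonal (fun _ => lamS) with hM
  have hentry : ∀ i j, (Aℝ - lam • 1) i j = S.val (M i j) := by
    intro i j
    have e1 : ∀ a : ℤ, S.val (algebraMap ℤ S a) = (a : ℝ) := by
      intro a
      simp [algebraMap_int_eq, map_intCast]
    by_cases h : i = j
    · subst h
      simp only [hM, Matrix.sub_apply, Matrix.map_apply, Matrix.diagonal_apply_eq, map_sub,
        e1, Matrix.smul_apply, Matrix.one_apply_eq, smul_eq_mul, mul_one]
      rfl
    · simp only [hM, Matrix.sub_apply, Matrix.map_apply, Matrix.diagonal_apply_ne _ h, map_sub,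
        map_zero, e1, Matrix.smul_apply, Matrix.one_apply_ne h, smul_eq_mul, mul_zero]
      rfl
  have hMmap : M.map S.val = Aℝ - lam • 1 := by
    ext i j
    rw [Matrix.map_apply]
    exact (hentry i j).symm
  have hdetS : M.det = 0 := by
    have h := AlgHom.map_det S.val M
    rw [AlgHom.mapMatrix_apply, hMmap, hdet] at h
    exact Subtype.ext h
  obtain ⟨w, hw0, hwM⟩ := (Matrix.exists_vecMul_eq_zero_iff).mpr hdetS
  refine ⟨fun i => (w i : ℝ), ?_, ?_, fun i => (w i).2⟩
  · intro h
    exact hw0 (funext fun i => Subtype.ext (congrFun h i))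
  · have hker' : Matrix.vecMul (fun i => (w i : ℝ)) (Aℝ - lam • 1) = 0 := by
      funext j
      have h := congrArg S.val (congrFun hwM j)
      rw [Pi.zero_apply, map_zero] at h
      simp only [Matrix.vecMul, dotProduct, map_sum, _root_.map_mul] at h
      simp only [Matrix.vecMul, dotProduct, Pi.zero_apply, hentry]
      exact h
    rw [Matrix.vecMul_sub, hsmul1, sub_eq_zero] at hker'
    exact hker'
end

section
/- Let A be an n × n nonnegative primitive integer matrix. Let λ ∈ ℝ with λ > 0, let r : Fin n → ℝ be a nonzero row vector with nonnegative entries satisfying r ᵥ* A = λ • r, and let w : Fin n → ℝ be a column vector with strictly positive entries satisfying A *ᵥ w = λ • w (A cast entrywise to ℝ). Assume λ is a simple root of the characteristic polynomial of A, and that every complex root z of the characteristic polynomial of A with z ≠ λ satisfies ‖z‖ < λ. Then for every integer vector v : Fin n → ℤ the following are equivalent: (i) 0 < r ⬝ᵥ v (dot product with v cast entrywise to ℝ); (ii) there exists m : ℕ such that every entry of (A^m) *ᵥ v is strictly positive. (Lemma 1: the nonzero part of the positive cone C₊ of the direct limit of (ℤ^n, φ*) is exactly the preimage of the positive reals under the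 homomorphism μ[(v,k)] = λ^{-k} r·v.) -/
open Matrix Polynomial

-- eval of charpoly as a determinant
lemma eval_charpoly' {n : ℕ} {K : Type*} [Field K] (M : Matrix (Fin n) (Fin n) K) (z : K) :
    (M.charpoly).eval z = (z • (1 : Matrix (Fin n) (Fin n) K) - M).det := by
  rw [Matrix.charpoly, ← Polynomial.coe_evalRingHom, RingHom.map_det]
  congr 1
  ext i j
  by_cases h : i = j <;>
    simp [h, Matrix.charmatrix_apply, Matrix.one_apply, Matrix.diagonal_apply]

-- root of charpoly iff eigenvector exists
lemma charpoly_root_iff {n : ℕ} {K : Type*} [Field K] (M : Matrix (Fin n) (Fin n) K) (z : K) :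
    (M.charpoly).IsRoot z ↔ ∃ u ≠ 0, M.mulVec u = z • u := by
  rw [Polynomial.IsRoot, eval_charpoly', ← Matrix.exists_mulVec_eq_zero_iff]
  constructor <;> rintro ⟨u, hu, h⟩ <;> refine ⟨u, hu, ?_⟩
  · have := h
    rw [Matrix.sub_mulVec, Matrix.smul_mulVec, Matrix.one_mulVec, sub_eq_zero] at this
    exact this.symm
  · rw [Matrix.sub_mulVec, Matrix.smul_mulVec, Matrix.one_mulVec, h, sub_self]

-- spectrum membership gives eigenvector
lemma spectrum_eigen {n : ℕ} {z : ℂ} {N : Matrix (Fin n) (Fin n) ℂ}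
    (hz : z ∈ spectrum ℂ N) : ∃ u ≠ 0, N.mulVec u = z • u := by
  rw [spectrum.mem_iff] at hz
  have hdet : (algebraMap ℂ (Matrix (Fin n) (Fin n) ℂ) z - N).det = 0 := by
    by_contra h
    exact hz ((Matrix.isUnit_iff_isUnit_det _).mpr (isUnit_iff_ne_zero.mpr h))
  rw [← Matrix.exists_mulVec_eq_zero_iff] at hdet
  obtain ⟨u, hu, h⟩ := hdet
  refine ⟨u, hu, ?_⟩
  rw [Matrix.sub_mulVec, sub_eq_zero, Algebra.algebraMap_eq_smul_one,
    Matrix.smul_mulVec, Matrix.one_mulVec] at h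
  exact h.symm
open Matrix

-- Perron: eigenvector of a strictly positive matrix for a positive eigenvalue, w positive,
-- any other real eigenvector is a multiple of w.
lemma perron_unique {n : ℕ} (B : Matrix (Fin n) (Fin n) ℝ) (hB : ∀ i j, 0 < B i j)
    (mu : ℝ) (hmu : 0 < mu) (w y : Fin n → ℝ) (hw : ∀ i, 0 < w i)
    (hBw : B.mulVec w = mu • w) (hBy : B.mulVec y = mu • y) :
    ∃ t : ℝ, y = t • w := by
  rcases Nat.eq_zero_or_pos n with hn | hn
  · exact ⟨0, funext fun i => absurd i.2 (by omega)⟩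
  have : Nonempty (Fin n) := ⟨⟨0, hn⟩⟩
  obtain ⟨i0, -, hi0⟩ := Finset.exists_min_image Finset.univ (fun i => y i / w i)
    ⟨Classical.arbitrary _, Finset.mem_univ _⟩
  set t := y i0 / w i0 with ht
  refine ⟨t, ?_⟩
  set q : Fin n → ℝ := fun i => y i - t * w i with hq
  have hqnn : ∀ i, 0 ≤ q i := by
    intro i
    have h1 := hi0 i (Finset.mem_univ i)
    have h2 := (le_div_iff₀ (hw i)).mp h1
    simp only [hq]; linarith
  have hq0 : q i0 = 0 := by
    simp only [hq, ht]
    rw [div_mul_cancel₀ _ (hw i0).ne', sub_self]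
  have hBq : B.mulVec q = mu • q := by
    have : q = y - t • w := by funext i; simp [hq, mul_comm]
    rw [this, Matrix.mulVec_sub, Matrix.mulVec_smul, hBw, hBy, smul_sub, smul_comm]
  by_cases hq' : q = 0
  · funext i
    have := congrFun hq' i
    simp [hq] at this
    simp [Pi.smul_apply, smul_eq_mul]
    linarith
  · exfalso
    obtain ⟨j, hj⟩ := Function.ne_iff.mp hq'
    have hqj : 0 < q j := lt_of_le_of_ne (hqnn j) (Ne.symm hj)
    have hpos : 0 < (B.mulVec q) i0 := by
      unfold Matrix.mulVec dotProduct
      refine Finset.sum_pos' (fun k _ => mul_nonneg (hB i0 k).le (hqnn k)) ⟨j, Finset.mem_univ j, ?_⟩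
      exact mul_pos (hB i0 j) hqj
    rw [hBq] at hpos
    simp [hq0] at hpos
open Matrix Filter Topology

attribute [local instance] Matrix.linftyOpNormedAddCommGroup Matrix.linftyOpNormedRing
  Matrix.linftyOpNormedAlgebra

lemma norm_pow_tendsto {n : ℕ} (hn : 0 < n) (N : Matrix (Fin n) (Fin n) ℂ)
    (lam : ℝ) (hlam : 0 < lam) (hspec : ∀ z ∈ spectrum ℂ N, ‖z‖ < lam) :
    Tendsto (fun m : ℕ => ‖N ^ m‖ / lam ^ m) atTop (𝓝 0) := by
  haveI : NeZero n := ⟨hn.ne'⟩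
  have hrad : spectralRadius ℂ N < ENNReal.ofReal lam := by
    have := spectrum.spectralRadius_lt_of_forall_lt N
      (r := lam.toNNReal) (fun z hz => by
        have h := hspec z hz
        rw [← NNReal.coe_lt_coe, coe_nnnorm, Real.coe_toNNReal _ hlam.le]
        exact h)
    simpa [ENNReal.ofReal] using this
  obtain ⟨c, hc1, hc2⟩ := exists_between hrad
  have hcne : c ≠ ⊤ := (hc2.trans_le le_top).ne
  set nu : ℝ := c.toReal with hnu
  have hnu0 : 0 ≤ nu := ENNReal.toReal_nonneg
  have hnult : nu < lam := by
    have := ENNReal.toReal_strict_mono (by simp) hc2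
    rwa [ENNReal.toReal_ofReal hlam.le] at this
  have hgel := spectrum.pow_nnnorm_pow_one_div_tendsto_nhds_spectralRadius N
  have hev : ∀ᶠ m : ℕ in atTop, (‖N ^ m‖₊ : ENNReal) ^ (1 / (m : ℝ)) < c :=
    hgel.eventually_lt_const hc1
  have hbound : ∀ᶠ m : ℕ in atTop, ‖N ^ m‖ ≤ nu ^ m := by
    filter_upwards [hev, Filter.eventually_ge_atTop 1] with m hm hm1
    have hmne : (m : ℝ) ≠ 0 := by positivity
    have h2 : ((‖N ^ m‖₊ : ENNReal) ^ (1 / (m : ℝ))) ^ (m : ℝ) ≤ c ^ (m : ℝ) :=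
      ENNReal.rpow_le_rpow hm.le (by positivity)
    rw [← ENNReal.rpow_mul, one_div, inv_mul_cancel₀ hmne, ENNReal.rpow_one,
      ENNReal.rpow_natCast] at h2
    have h3 := ENNReal.toReal_mono (by simp [ENNReal.pow_ne_top hcne]) h2
    rwa [ENNReal.coe_toReal, coe_nnnorm, ENNReal.toReal_pow] at h3
  have hratio : Tendsto (fun m : ℕ => (nu / lam) ^ m) atTop (𝓝 0) := by
    apply tendsto_pow_atTop_nhds_zero_of_lt_one (by positivity)
    rw [div_lt_one hlam]; exact hnult
  refine squeeze_zero' (Filter.Eventually.of_forall fun m => by positivity) ?_ hratio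
  filter_upwards [hbound] with m hm
  rw [div_pow]
  exact div_le_div_of_nonneg_right hm (by positivity) |>.trans_eq rfl
open Matrix

variable {n : ℕ}

lemma dot_ofReal (r x : Fin n → ℝ) :
    dotProduct (fun i => (r i : ℂ)) (fun i => (x i : ℂ)) = ((dotProduct r x : ℝ) : ℂ) := by
  simp [dotProduct]

lemma mulVec_ofReal (B : Matrix (Fin n) (Fin n) ℝ) (x : Fin n → ℝ) :
    (B.map Complex.ofReal).mulVec (fun i => (x i : ℂ)) = fun i => (((B.mulVec x) i : ℝ) : ℂ) := by
  funext i
  simp [Matrix.mulVec, dotProduct]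

lemma vecMul_ofReal (B : Matrix (Fin n) (Fin n) ℝ) (x : Fin n → ℝ) :
    Matrix.vecMul (fun i => (x i : ℂ)) (B.map Complex.ofReal) = fun j => (((Matrix.vecMul x B) j : ℝ) : ℂ) := by
  funext j
  simp [Matrix.vecMul, dotProduct]

lemma mulVec_intCast (M : Matrix (Fin n) (Fin n) ℤ) (x : Fin n → ℤ) :
    (M.map (Int.cast : ℤ → ℝ)).mulVec (fun i => (x i : ℝ)) = fun i => (((M.mulVec x) i : ℤ) : ℝ) := by
  funext i
  simp [Matrix.mulVec, dotProduct]

lemma map_pow_intCast (A : Matrix (Fin n) (Fin n) ℤ) (k : ℕ) :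
    (A ^ k).map (Int.cast : ℤ → ℝ) = (A.map (Int.cast : ℤ → ℝ)) ^ k := by
  simpa using map_pow ((Int.castRingHom ℝ).mapMatrix) A k

lemma map_ofReal_pow (B : Matrix (Fin n) (Fin n) ℝ) (k : ℕ) :
    (B ^ k).map Complex.ofReal = (B.map Complex.ofReal) ^ k := by
  exact map_pow ((Complex.ofRealHom).mapMatrix) B k

lemma intCast_complex_eq (A : Matrix (Fin n) (Fin n) ℤ) :
    A.map (Int.cast : ℤ → ℂ) = (A.map (Int.cast : ℤ → ℝ)).map Complex.ofReal := by
  ext i j; simp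

lemma vecMulVec_mulVec' (w r u : Fin n → ℂ) :
    (Matrix.vecMulVec w r).mulVec u = (dotProduct r u) • w := by
  funext i
  simp [Matrix.vecMulVec, Matrix.mulVec, dotProduct, Finset.mul_sum, mul_assoc]
  rw [Finset.sum_mul]
  exact Finset.sum_congr rfl fun j _ => by ring

open Matrix Filter Topology in
theorem stmt3 (n : ℕ) (A : Matrix (Fin n) (Fin n) ℤ)
    (hA : ∀ i j, 0 ≤ A i j) (hprim : ∃ k, ∀ i j, 0 < (A ^ k) i j)
    (lam : ℝ) (hlam : 0 < lam)
    (r : Fin n → ℝ) (hr0 : r ≠ 0) (hrnn : ∀ i, 0 ≤ r i)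
    (hr : Matrix.vecMul r (A.map (Int.cast : ℤ → ℝ)) = lam • r)
    (w : Fin n → ℝ) (hw : ∀ i, 0 < w i)
    (hww : (A.map (Int.cast : ℤ → ℝ)).mulVec w = lam • w)
    (hsimple : ((A.map (Int.cast : ℤ → ℝ)).charpoly).rootMultiplicity lam = 1)
    (hdom : ∀ z : ℂ, ((A.map (Int.cast : ℤ → ℂ)).charpoly).IsRoot z →
      z ≠ (lam : ℂ) → ‖z‖ < lam)
    (v : Fin n → ℤ) :
    0 < dotProduct r (fun i => (v i : ℝ)) ↔
      ∃ m : ℕ, ∀ i, 0 < ((A ^ m).mulVec v) i := by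
  classical
  set B := A.map (Int.cast : ℤ → ℝ) with hB
  -- positive entry of r
  obtain ⟨i0, hi0⟩ := Function.ne_iff.mp hr0
  have hri0 : 0 < r i0 := lt_of_le_of_ne (hrnn i0) (Ne.symm hi0)
  have hn : 0 < n := i0.pos
  -- r ⬝ᵥ w > 0
  have hrw : 0 < dotProduct r w :=
    Finset.sum_pos' (fun i _ => mul_nonneg (hrnn i) (hw i).le)
      ⟨i0, Finset.mem_univ i0, mul_pos hri0 (hw i0)⟩
  -- vecMul r (B ^ m) = lam ^ m • r
  have hrpow : ∀ m : ℕ, Matrix.vecMul r (B ^ m) = lam ^ m • r := by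
    intro m
    induction m with
    | zero => simp
    | succ m ih =>
      rw [pow_succ, ← Matrix.vecMul_vecMul, ih, Matrix.smul_vecMul, hr, smul_smul, pow_succ]
  -- B ^ m *ᵥ w = lam ^ m • w
  have hwpow : ∀ m : ℕ, (B ^ m).mulVec w = lam ^ m • w := by
    intro m
    induction m with
    | zero => simp
    | succ m ih =>
      rw [pow_succ', ← Matrix.mulVec_mulVec, ih, Matrix.mulVec_smul, hww, smul_smul, pow_succ']
      ring_nf
  constructor
  · obtain ⟨k, hk⟩ := hprim
    intro hpos
    set rw' := dotProduct r w with hrwdef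
    set c := dotProduct r (fun i => (v i : ℝ)) / rw' with hc
    have hcpos : 0 < c := div_pos hpos hrw
    set x : Fin n → ℝ := fun i => (v i : ℝ) - c * w i with hx
    have hrx : dotProduct r x = 0 := by
      have hsplit : x = (fun i => (v i : ℝ)) - c • w := by funext i; simp [hx, mul_comm]
      rw [hsplit, dotProduct_sub, dotProduct_smul, smul_eq_mul, hc,
        div_mul_cancel₀ _ hrw.ne', sub_self]
    set Mc := A.map (Int.cast : ℤ → ℂ) with hMcdef
    have hMcB : Mc = B.map Complex.ofReal := intCast_complex_eq A
    set rc : Fin n → ℂ := fun i => (r i : ℂ) with hrc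
    set wc : Fin n → ℂ := fun i => (w i : ℂ) with hwc
    set N := Mc - ((lam / rw' : ℝ) : ℂ) • Matrix.vecMulVec wc rc with hN
    have hrcMc : Matrix.vecMul rc Mc = (lam : ℂ) • rc := by
      rw [hMcB, hrc, vecMul_ofReal B r]
      funext j
      simp [hr]
    have hrcwc : dotProduct rc wc = (rw' : ℂ) := dot_ofReal r w
    have hdotMc : ∀ y : Fin n → ℂ,
        dotProduct rc (Mc.mulVec y) = (lam : ℂ) * dotProduct rc y := by
      intro y
      rw [Matrix.dotProduct_mulVec, hrcMc, smul_dotProduct, smul_eq_mul]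
    have hrwC : ((rw' : ℝ) : ℂ) ≠ 0 := by exact_mod_cast hrw.ne'
    have hspec : ∀ z ∈ spectrum ℂ N, ‖z‖ < lam := by
      intro z hz
      obtain ⟨u, hu, huz⟩ := spectrum_eigen hz
      set d := dotProduct rc u with hd
      have hNu : N.mulVec u = Mc.mulVec u - ((lam / rw' : ℝ) : ℂ) • (d • wc) := by
        rw [hN, Matrix.sub_mulVec, Matrix.smul_mulVec, vecMulVec_mulVec']
      have hzd : z * d = 0 := by
        have h1 : dotProduct rc (N.mulVec u) = z * d := by
          rw [huz, dotProduct_smul, smul_eq_mul]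
        have h2 : dotProduct rc (N.mulVec u) = 0 := by
          rw [hNu, dotProduct_sub, hdotMc, dotProduct_smul, dotProduct_smul,
            hrcwc]
          push_cast
          field_simp
          rw [← hd]; simp only [smul_eq_mul]
          rw [mul_comm d, ← mul_assoc, div_mul_cancel₀ _ hrwC, sub_self]
        rw [← h1, h2]
      rcases mul_eq_zero.mp hzd with hz0 | hd0
      · rw [hz0]; simpa using hlam
      · have hMcu : Mc.mulVec u = z • u := by
          rw [← huz, hNu, hd0, zero_smul, smul_zero, sub_zero]
        by_cases hzl : z = (lam : ℂ)
        · exfalso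
          set a : Fin n → ℝ := fun i => (u i).re with ha
          set b : Fin n → ℝ := fun i => (u i).im with hb
          have husplit : u = (fun j => ((a j : ℝ) : ℂ)) + Complex.I • (fun j => ((b j : ℝ) : ℂ)) := by
            funext j
            simp [ha, hb, Complex.ext_iff]
          have hMcsplit : Mc.mulVec u
              = (fun i => ((B.mulVec a i : ℝ) : ℂ)) + Complex.I • (fun i => ((B.mulVec b i : ℝ) : ℂ)) := by
            rw [husplit, Matrix.mulVec_add, Matrix.mulVec_smul, hMcB, mulVec_ofReal, mulVec_ofReal]
          have hcomp : ∀ i, B.mulVec a i = lam * a i ∧ B.mulVec b i = lam * b i := by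
            intro i
            have h3 := congrFun (hMcsplit.symm.trans (hMcu.trans (by rw [hzl]))) i
            rw [husplit] at h3
            simp only [Pi.add_apply, Pi.smul_apply, smul_eq_mul] at h3
            rw [Complex.ext_iff] at h3
            constructor
            · have := h3.1; simpa using this
            · have := h3.2; simpa using this
          have hBa : B.mulVec a = lam • a := funext fun i => (hcomp i).1
          have hBb : B.mulVec b = lam • b := funext fun i => (hcomp i).2
          have hBkpos : ∀ i j, 0 < (B ^ k) i j := by
            intro i j
            rw [hB, ← map_pow_intCast]
            simpa [Matrix.map_apply] using (by exact_mod_cast hk i j : (0:ℝ) < ((A ^ k) i j : ℝ))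
          have hdsplit : d = ((dotProduct r a : ℝ) : ℂ)
              + Complex.I * ((dotProduct r b : ℝ) : ℂ) := by
            rw [hd, husplit, dotProduct_add, dotProduct_smul, hrc,
              dot_ofReal, dot_ofReal, smul_eq_mul]
          have hra : dotProduct r a = 0 ∧ dotProduct r b = 0 := by
            rw [hd0] at hdsplit
            have := hdsplit.symm
            rw [Complex.ext_iff] at this
            constructor
            · have h := this.1; simpa using h
            · have h := this.2; simpa using h
          have hzero : ∀ y : Fin n → ℝ, B.mulVec y = lam • y → dotProduct r y = 0 → y = 0 := by
            intro y hy hry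
            have hyk : ∀ m : ℕ, (B ^ m).mulVec y = lam ^ m • y := by
              intro m
              induction m with
              | zero => simp
              | succ m ih =>
                rw [pow_succ', ← Matrix.mulVec_mulVec, ih, Matrix.mulVec_smul, hy, smul_smul,
                  pow_succ']
                ring_nf
            obtain ⟨t, hty⟩ := perron_unique (B ^ k) hBkpos (lam ^ k) (pow_pos hlam k) w y hw
              (hwpow k) (hyk k)
            rw [hty, dotProduct_smul, smul_eq_mul] at hry
            rcases mul_eq_zero.mp hry with ht | hrw0
            · rw [hty, ht, zero_smul]
            · exact absurd hrw0 hrw.ne'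
          have hau : a = 0 := hzero a hBa hra.1
          have hbu : b = 0 := hzero b hBb hra.2
          apply hu
          funext i
          rw [Complex.ext_iff]
          exact ⟨by simpa using congrFun hau i, by simpa using congrFun hbu i⟩
        · exact hdom z ((charpoly_root_iff Mc z).mpr ⟨u, hu, hMcu⟩) hzl
    have htend := norm_pow_tendsto hn N lam hlam hspec
    set xc : Fin n → ℂ := fun i => (x i : ℂ) with hxc
    have hrcxc : dotProduct rc xc = 0 := by
      rw [hrc, hxc, dot_ofReal, hrx, Complex.ofReal_zero]
    have hNM : ∀ m : ℕ, (Mc ^ m).mulVec xc = (N ^ m).mulVec xc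
        ∧ dotProduct rc ((Mc ^ m).mulVec xc) = 0 := by
      intro m
      induction m with
      | zero => simpa using hrcxc
      | succ m ih =>
        obtain ⟨ih1, ih2⟩ := ih
        have hstep : (Mc ^ (m + 1)).mulVec xc = Mc.mulVec ((Mc ^ m).mulVec xc) := by
          rw [Matrix.mulVec_mulVec, ← pow_succ']
        have hstepN : (N ^ (m + 1)).mulVec xc = N.mulVec ((N ^ m).mulVec xc) := by
          rw [Matrix.mulVec_mulVec, ← pow_succ']
        constructor
        · rw [hstep, hstepN, ← ih1, hN, Matrix.sub_mulVec, Matrix.smul_mulVec,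
            vecMulVec_mulVec', ih2, zero_smul, smul_zero, sub_zero]
        · rw [hstep, hdotMc, ih2, mul_zero]
    have hxcB : ∀ m : ℕ, ∀ i, |((B ^ m).mulVec x) i| ≤ ‖N ^ m‖ * ‖xc‖ := by
      intro m i
      have hcast : (Mc ^ m).mulVec xc = fun i => (((B ^ m).mulVec x) i : ℂ) := by
        rw [hMcB, ← map_ofReal_pow, hxc]
        exact mulVec_ofReal _ _
      have h1 : ‖((N ^ m).mulVec xc) i‖ ≤ ‖N ^ m‖ * ‖xc‖ :=
        (norm_le_pi_norm _ i).trans (Matrix.linfty_opNorm_mulVec _ _)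
      rw [← (hNM m).1, hcast] at h1
      simpa using h1
    obtain ⟨i1, -, hi1⟩ := Finset.exists_min_image Finset.univ w ⟨i0, Finset.mem_univ i0⟩
    have hδ : 0 < w i1 := hw i1
    have hεpos : 0 < c * w i1 / (‖xc‖ + 1) := by positivity
    obtain ⟨m, hm⟩ := (htend.eventually (gt_mem_nhds hεpos)).exists
    refine ⟨m, fun i => ?_⟩
    have hlp : (0:ℝ) < lam ^ m := pow_pos hlam m
    have h2 : ‖N ^ m‖ < c * w i1 / (‖xc‖ + 1) * lam ^ m := by
      rw [div_lt_iff₀ hlp] at hm; exact hm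
    have hεK : c * w i1 / (‖xc‖ + 1) * (‖xc‖ + 1) = c * w i1 :=
      div_mul_cancel₀ _ (by positivity)
    have h1 : ‖N ^ m‖ * ‖xc‖ < c * w i1 * lam ^ m := by
      nlinarith [norm_nonneg xc, norm_nonneg (N ^ m)]
    have hdecomp : ((B ^ m).mulVec (fun i => (v i : ℝ))) = (B ^ m).mulVec x + c • (lam ^ m • w) := by
      have hv : (fun i => (v i : ℝ)) = x + c • w := by funext i; simp [hx]
      rw [hv, Matrix.mulVec_add, Matrix.mulVec_smul, hwpow]
    have h3 : -(c * w i1 * lam ^ m) < ((B ^ m).mulVec x) i :=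
      (abs_lt.mp ((hxcB m i).trans_lt h1)).1
    have h4 : c * w i1 * lam ^ m ≤ c * (lam ^ m * w i) := by
      have hww' := hi1 i (Finset.mem_univ i)
      nlinarith [mul_nonneg (mul_nonneg hcpos.le hlp.le) (sub_nonneg.mpr hww')]
    have hBmpos : 0 < ((B ^ m).mulVec (fun i => (v i : ℝ))) i := by
      rw [hdecomp]
      simp only [Pi.add_apply, Pi.smul_apply, smul_eq_mul]
      linarith
    have hcast2 : ((B ^ m).mulVec (fun i => (v i : ℝ))) i = (((A ^ m).mulVec v) i : ℝ) := by
      rw [hB, ← map_pow_intCast, mulVec_intCast]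
    rw [hcast2] at hBmpos
    exact_mod_cast hBmpos
  · rintro ⟨m, hm⟩
    -- easy direction
    have hcast : (B ^ m).mulVec (fun i => (v i : ℝ)) = fun i => (((A ^ m).mulVec v i : ℤ) : ℝ) := by
      rw [hB, ← map_pow_intCast]; exact mulVec_intCast _ _
    have key : lam ^ m * dotProduct r (fun i => (v i : ℝ))
        = dotProduct r ((B ^ m).mulVec (fun i => (v i : ℝ))) := by
      rw [Matrix.dotProduct_mulVec, hrpow]
      simp [smul_dotProduct]
    have hgt : 0 < dotProduct r ((B ^ m).mulVec (fun i => (v i : ℝ))) := by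
      rw [hcast]
      refine Finset.sum_pos' (fun i _ => mul_nonneg (hrnn i) ?_)
        ⟨i0, Finset.mem_univ i0, mul_pos hri0 ?_⟩
      · simp only []; exact_mod_cast (hm i).le
      · simp only []; exact_mod_cast hm i0
    have h2 : 0 < lam ^ m * dotProduct r (fun i => (v i : ℝ)) := key ▸ hgt
    nlinarith [pow_pos hlam m]
end

section
/- Let A be an n × n nonnegative primitive integer matrix, let λ ∈ ℝ with λ > 0, and let r : Fin n → ℝ be a nonzero row vector with nonnegative entries satisfying r ᵥ* A = λ • r (A cast entrywise to ℝ). Let v : Fin n → ℤ and suppose there exists m : ℕ such that (A^m) *ᵥ v has all entries ≥ 0 and is not the zero vector. Then 0 < r ⬝ᵥ v (dot product with v cast entrywise to ℝ). (The forward inclusion in Lemma 1: every nonzero element of the positive cone C₊ has strictly positive μ-value.) -/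
theorem stmt4 (n : ℕ) (A : Matrix (Fin n) (Fin n) ℤ)
    (hA : ∀ i j, 0 ≤ A i j) (hprim : ∃ k, ∀ i j, 0 < (A ^ k) i j)
    (lam : ℝ) (hlam : 0 < lam)
    (r : Fin n → ℝ) (hr0 : r ≠ 0) (hrnn : ∀ i, 0 ≤ r i)
    (hr : Matrix.vecMul r (A.map (Int.cast : ℤ → ℝ)) = lam • r)
    (v : Fin n → ℤ) (m : ℕ)
    (hnn : ∀ i, 0 ≤ ((A ^ m).mulVec v) i) (hne : (A ^ m).mulVec v ≠ 0) :
    0 < dotProduct r (fun i => (v i : ℝ)) := by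
  set B : Matrix (Fin n) (Fin n) ℝ := A.map (Int.cast : ℤ → ℝ) with hB
  have hpow : ∀ k : ℕ, Matrix.vecMul r (B ^ k) = (lam ^ k) • r := by
    intro k
    induction k with
    | zero => simp
    | succ k ih =>
      rw [pow_succ, ← Matrix.vecMul_vecMul, ih, Matrix.smul_vecMul, hr,
        smul_smul, pow_succ]
  have hBpow : ∀ k : ℕ, (B ^ k) = ((A ^ k).map (Int.cast : ℤ → ℝ)) := by
    intro k
    have := map_pow ((Int.castRingHom ℝ).mapMatrix) A k
    simpa [hB, RingHom.mapMatrix_apply] using this.symm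
  obtain ⟨k, hk⟩ := hprim
  obtain ⟨i0, hi0⟩ : ∃ i, 0 < r i := by
    by_contra h
    push_neg at h
    exact hr0 (funext fun i => le_antisymm (h i) (hrnn i))
  have hrpos : ∀ j, 0 < r j := by
    intro j
    have h1 : (lam ^ k) * r j = ∑ i, r i * (B ^ k) i j := by
      have := congrFun (hpow k) j
      simpa [Matrix.vecMul, dotProduct] using this.symm
    have hpos : 0 < ∑ i, r i * (B ^ k) i j := by
      refine Finset.sum_pos' (fun i _ => mul_nonneg (hrnn i) ?_) ⟨i0, Finset.mem_univ _, ?_⟩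
      · rw [hBpow]; simp only [Matrix.map_apply]; exact_mod_cast (hk i j).le
      · refine mul_pos hi0 ?_
        rw [hBpow]; simp only [Matrix.map_apply]; exact_mod_cast hk i0 j
    nlinarith [pow_pos hlam k]
  -- now the main argument
  set w : Fin n → ℤ := (A ^ m).mulVec v with hw
  obtain ⟨j0, hj0⟩ : ∃ j, 0 < w j := by
    by_contra h
    push_neg at h
    exact hne (funext fun j => le_antisymm (h j) (hnn j))
  have hcast : ∀ j, ((B ^ m).mulVec (fun i => (v i : ℝ))) j = (w j : ℝ) := by
    intro j
    rw [hBpow]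
    simp [Matrix.mulVec, dotProduct, hw, Matrix.map_apply]
  have key : lam ^ m * dotProduct r (fun i => (v i : ℝ))
      = ∑ j, r j * (w j : ℝ) := by
    have h1 : dotProduct r ((B ^ m).mulVec (fun i => (v i : ℝ)))
        = dotProduct (Matrix.vecMul r (B ^ m)) (fun i => (v i : ℝ)) :=
      Matrix.dotProduct_mulVec r (B ^ m) _
    rw [hpow m, smul_dotProduct, smul_eq_mul] at h1
    rw [← h1]
    simp [dotProduct, hcast]
  have hpos : 0 < ∑ j, r j * (w j : ℝ) := by
    refine Finset.sum_pos' (fun j _ => mul_nonneg (hrpos j).le ?_) ⟨j0, Finset.mem_univ _, ?_⟩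
    · exact_mod_cast hnn j
    · exact mul_pos (hrpos j0) (by exact_mod_cast hj0)
  nlinarith [pow_pos hlam m]
end

section
/- Let A be an n × n real matrix, let λ ∈ ℝ with λ > 1, and let r : Fin n → ℝ be a row vector with r ᵥ* A = λ • r. Let u : Fin n → ℝ and C ≥ 0 be such that for every l : ℕ and every index i, |((A^l) *ᵥ u) i| ≤ C * λ^(l/2) (real power with exponent l/2). Then r ⬝ᵥ u = 0. (The key estimate in the proof of Lemma 2: a cochain whose substitution iterates grow at most like the perimeter, i.e. like λ^{l/2}, is annihilated by the Perron weight μ; hence Im δ ⊆ Ker μ.) -/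
open Filter

theorem stmt5 (n : ℕ) (A : Matrix (Fin n) (Fin n) ℝ) (lam : ℝ) (hlam : 1 < lam)
    (r : Fin n → ℝ) (hr : Matrix.vecMul r A = lam • r)
    (u : Fin n → ℝ) (C : ℝ) (hC : 0 ≤ C)
    (hbound : ∀ (l : ℕ) (i : Fin n),
      |((A ^ l).mulVec u) i| ≤ C * lam ^ ((l : ℝ) / 2)) :
    dotProduct r u = 0 := by
  have hlam0 : (0:ℝ) < lam := lt_trans one_pos hlam
  have hpow : ∀ l : ℕ, Matrix.vecMul r (A ^ l) = (lam ^ l) • r := by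
    intro l
    induction l with
    | zero => simp
    | succ k ih =>
      rw [pow_succ, ← Matrix.vecMul_vecMul, ih, Matrix.smul_vecMul, hr,
        smul_smul, pow_succ]
  set s := dotProduct r u with hs
  set K := (∑ i, |r i|) * C with hK
  have hKnn : 0 ≤ K := mul_nonneg (Finset.sum_nonneg fun i _ => abs_nonneg _) hC
  have key : ∀ l : ℕ, |lam ^ l * s| ≤ K * lam ^ ((l : ℝ) / 2) := by
    intro l
    have h1 : lam ^ l * s = dotProduct r ((A ^ l).mulVec u) := by
      rw [Matrix.dotProduct_mulVec, hpow, smul_dotProduct, smul_eq_mul, hs]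
    rw [h1]
    calc |dotProduct r ((A ^ l).mulVec u)|
        ≤ ∑ i, |r i * ((A ^ l).mulVec u) i| := Finset.abs_sum_le_sum_abs _ _
      _ ≤ ∑ i, |r i| * (C * lam ^ ((l : ℝ) / 2)) := by
          refine Finset.sum_le_sum fun i _ => ?_
          rw [abs_mul]
          exact mul_le_mul_of_nonneg_left (hbound l i) (abs_nonneg _)
      _ = K * lam ^ ((l : ℝ) / 2) := by rw [← Finset.sum_mul, hK, mul_assoc]
  have key2 : ∀ l : ℕ, |s| ≤ K * (lam ^ (-(1:ℝ)/2)) ^ l := by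
    intro l
    have hpl : (0:ℝ) < lam ^ l := pow_pos hlam0 l
    have := key l
    rw [abs_mul, abs_pow, abs_of_pos hlam0] at this
    have h2 : |s| ≤ K * lam ^ ((l : ℝ) / 2) / lam ^ l := by
      rw [le_div_iff₀ hpl, mul_comm |s| _]
      exact this
    refine h2.trans (le_of_eq ?_)
    rw [mul_div_assoc]
    congr 1
    rw [← Real.rpow_natCast lam l, ← Real.rpow_sub hlam0, ← Real.rpow_natCast (lam ^ (-(1:ℝ)/2)) l,
      ← Real.rpow_mul hlam0.le]
    congr 1
    ring
  have hbase : lam ^ (-(1:ℝ)/2) < 1 := by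
    apply Real.rpow_lt_one_of_one_lt_of_neg hlam
    norm_num
  have hbase0 : 0 ≤ lam ^ (-(1:ℝ)/2) := Real.rpow_nonneg hlam0.le _
  have htend : Tendsto (fun l : ℕ => K * (lam ^ (-(1:ℝ)/2)) ^ l) atTop (nhds 0) := by
    have := tendsto_pow_atTop_nhds_zero_of_lt_one hbase0 hbase
    simpa using this.const_mul K
  have habs : |s| ≤ 0 :=
    le_of_tendsto_of_tendsto' tendsto_const_nhds htend key2
  exact abs_nonpos_iff.mp habs
end

section
/- Let G and G' be additive abelian groups, let μ : G →+ ℝ and μ' : G' →+ ℝ be additive homomorphisms, and let h : G ≃+ G' be an order isomorphism, i.e., a group isomorphism such that for every z ∈ G, 0 ≤ μ z if and only if 0 ≤ μ' (h z). If x, y ∈ G satisfy 0 < μ x and 0 < μ y, then μ x * μ' (h y) = μ y * μ' (h x); equivalently, μ(x)/μ(y) = μ'(h x)/μ'(h y). (Lemma 5: an order isomorphism preserves ratios of positive μ-values.) -/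
lemma stmt7_pos {G G' : Type*} [AddCommGroup G] [AddCommGroup G']
    (μ : G →+ ℝ) (μ' : G' →+ ℝ) (h : G ≃+ G')
    (horder : ∀ z : G, 0 ≤ μ z ↔ 0 ≤ μ' (h z))
    (x : G) (hx : 0 < μ x) : 0 < μ' (h x) := by
  by_contra hc
  push_neg at hc
  have h1 : ¬ 0 ≤ μ (-x) := by
    rw [map_neg]; linarith
  have h2 : 0 ≤ μ' (h (-x)) := by
    rw [map_neg, map_neg]; linarith
  exact h1 ((horder (-x)).2 h2)

lemma stmt7_le {G G' : Type*} [AddCommGroup G] [AddCommGroup G']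
    (μ : G →+ ℝ) (μ' : G' →+ ℝ) (h : G ≃+ G')
    (horder : ∀ z : G, 0 ≤ μ z ↔ 0 ≤ μ' (h z))
    (x y : G) (hx : 0 < μ x) (hy : 0 < μ y) :
    μ y * μ' (h x) ≤ μ x * μ' (h y) := by
  have hx' := stmt7_pos μ μ' h horder x hx
  have hy' := stmt7_pos μ μ' h horder y hy
  by_contra hc
  push_neg at hc
  have hlt : μ x / μ y < μ' (h x) / μ' (h y) := by
    rw [div_lt_div_iff₀ hy hy']
    linarith [mul_comm (μ x) (μ' (h y))]
  obtain ⟨q, hq1, hq2⟩ := exists_rat_btwn hlt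
  have hq : (q : ℝ) = (q.num : ℝ) / (q.den : ℝ) := by
    exact_mod_cast (Rat.num_div_den q).symm
  have hden : (0 : ℝ) < (q.den : ℝ) := by positivity
  have h3 : (q.den : ℝ) * μ x < (q.num : ℝ) * μ y := by
    rw [hq, div_lt_div_iff₀ hy hden] at hq1
    linarith [mul_comm (μ x) ((q.den : ℝ))]
  have h4 : (q.num : ℝ) * μ' (h y) < (q.den : ℝ) * μ' (h x) := by
    rw [hq, div_lt_div_iff₀ hden hy'] at hq2
    linarith [mul_comm (μ' (h x)) ((q.den : ℝ))]
  set z : G := q.num • y - (q.den : ℤ) • x with hz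
  have hμz : 0 ≤ μ z := by
    rw [hz, map_sub, map_zsmul, map_zsmul, zsmul_eq_mul, zsmul_eq_mul]
    push_cast
    linarith
  have hμ'z : 0 ≤ μ' (h z) := (horder z).1 hμz
  rw [hz, map_sub, map_sub, map_zsmul, map_zsmul, map_zsmul, map_zsmul,
    zsmul_eq_mul, zsmul_eq_mul] at hμ'z
  push_cast at hμ'z
  linarith

theorem stmt7 {G G' : Type*} [AddCommGroup G] [AddCommGroup G']
    (μ : G →+ ℝ) (μ' : G' →+ ℝ) (h : G ≃+ G')
    (horder : ∀ z : G, 0 ≤ μ z ↔ 0 ≤ μ' (h z))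
    (x y : G) (hx : 0 < μ x) (hy : 0 < μ y) :
    μ x * μ' (h y) = μ y * μ' (h x) := by
  exact le_antisymm (stmt7_le μ μ' h horder y x hy hx)
    (stmt7_le μ μ' h horder x y hx hy)
end

section
/- Let λ, λ' ∈ ℝ with λ' ≠ 0. Let G and G' be additive abelian groups, μ : G →+ ℝ and μ' : G' →+ ℝ additive homomorphisms, and h : G ≃+ G' an order isomorphism (for every z ∈ G, 0 ≤ μ z if and only if 0 ≤ μ' (h z)). Assume: (a) every value of μ' lies in ℤ[1/λ'] = Algebra.adjoin ℤ ({λ'⁻¹} : Set ℝ); (b) there exists x ∈ G with 0 < μ x; (c) the λ-shift property holds for (G, μ). Then there exist integer polynomials p, q such that Polynomial.aeval λ' q ≠ 0 and λ * (Polynomial.aeval λ' q) = Polynomial.aeval λ' p, i.e., λ = p(λ')/q(λ'). (Equation 16 in the proof of Lemma 6.) -/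
theorem stmt8 (lam lam' : ℝ) (hlam' : lam' ≠ 0)
    {G G' : Type*} [AddCommGroup G] [AddCommGroup G']
    (μ : G →+ ℝ) (μ' : G' →+ ℝ) (h : G ≃+ G')
    (horder : ∀ z : G, 0 ≤ μ z ↔ 0 ≤ μ' (h z))
    (ha : ∀ g' : G', μ' g' ∈ Algebra.adjoin ℤ ({lam'⁻¹} : Set ℝ))
    (hb : ∃ x : G, 0 < μ x)
    (hc : ∀ x : G, ∃ y : G, lam * μ y = μ x) :
    ∃ p q : Polynomial ℤ, Polynomial.aeval lam' q ≠ 0 ∧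
      lam * Polynomial.aeval lam' q = Polynomial.aeval lam' p := by
  obtain ⟨x, hx⟩ := hb
  obtain ⟨y, hy⟩ := hc x
  set ν : G →+ ℝ := μ'.comp h.toAddMonoidHom with hν
  have hνx : 0 < ν x := by
    rcases lt_or_eq_of_le ((horder x).mp hx.le) with h1 | h1
    · exact h1
    · exfalso
      have : 0 ≤ μ' (h (-x)) := by
        simp [← h1, map_neg]
      have := (horder (-x)).mpr this
      simp only [map_neg, Left.nonneg_neg_iff] at this
      linarith
  -- proportionality at y : μ y * ν x = ν y * μ x
  have key : μ y * ν x = ν y * μ x := by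
    by_contra hne
    have main : ∀ (μ₁ μ₂ : G →+ ℝ), (∀ z : G, 0 ≤ μ₁ z ↔ 0 ≤ μ₂ z) →
        0 < μ₁ x → 0 < μ₂ x → ¬ (μ₁ y / μ₁ x < μ₂ y / μ₂ x) := by
      intro μ₁ μ₂ hord h1 h2 hlt
      obtain ⟨q, hq1, hq2⟩ := exists_rat_btwn hlt
      have hq1' : μ₁ y * (q.den : ℝ) < (q.num : ℝ) * μ₁ x := by
        rw [div_lt_iff₀ h1] at hq1
        have hden : (0:ℝ) < (q.den : ℝ) := by positivity
        have : (q:ℝ) * (q.den : ℝ) = (q.num : ℝ) := by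
          rw [mul_comm]; exact_mod_cast Rat.den_mul_eq_num q
        nlinarith
      have hq2' : (q.num : ℝ) * μ₂ x < μ₂ y * (q.den : ℝ) := by
        rw [lt_div_iff₀ h2] at hq2
        have hden : (0:ℝ) < (q.den : ℝ) := by positivity
        have : (q:ℝ) * (q.den : ℝ) = (q.num : ℝ) := by
          rw [mul_comm]; exact_mod_cast Rat.den_mul_eq_num q
        nlinarith
      set w : G := (q.den : ℤ) • y - q.num • x with hw
      have hμ₁w : μ₁ w < 0 := by
        simp only [hw, map_sub, map_zsmul, zsmul_eq_mul]
        push_cast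
        nlinarith
      have hμ₂w : 0 ≤ μ₂ w := by
        simp only [hw, map_sub, map_zsmul, zsmul_eq_mul]
        push_cast
        nlinarith
      exact absurd ((hord w).mpr hμ₂w) (not_le.mpr hμ₁w)
    have hord' : ∀ z : G, 0 ≤ μ z ↔ 0 ≤ ν z := horder
    rcases lt_or_gt_of_ne hne with h1 | h1
    · exact main μ ν hord' hx hνx
        ((div_lt_div_iff₀ hx hνx).mpr h1)
    · exact main ν μ (fun z => (hord' z).symm) hνx hx
        ((div_lt_div_iff₀ hνx hx).mpr h1)
  have hlnu : lam * ν y = ν x := by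
    have hμx : μ x ≠ 0 := ne_of_gt hx
    have : lam * ν y * μ x = ν x * μ x := by
      calc lam * ν y * μ x = lam * (ν y * μ x) := by ring
        _ = lam * (μ y * ν x) := by rw [key]
        _ = (lam * μ y) * ν x := by ring
        _ = μ x * ν x := by rw [hy]
        _ = ν x * μ x := by ring
    exact mul_right_cancel₀ hμx this
  have hνy : ν y ≠ 0 := by
    intro h0
    rw [h0, mul_zero] at hlnu
    exact absurd hlnu.symm (ne_of_gt hνx)
  -- express ν x, ν y as integer polynomials in lam'⁻¹
  obtain ⟨px, hpx⟩ : ∃ p : Polynomial ℤ, Polynomial.aeval (lam'⁻¹) p = ν x := by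
    have := ha (h x)
    rw [Algebra.adjoin_singleton_eq_range_aeval] at this
    exact this
  obtain ⟨qy, hqy⟩ : ∃ p : Polynomial ℤ, Polynomial.aeval (lam'⁻¹) p = ν y := by
    have := ha (h y)
    rw [Algebra.adjoin_singleton_eq_range_aeval] at this
    exact this
  set N := max px.natDegree qy.natDegree with hN
  have : Invertible (lam'⁻¹) := invertibleOfNonzero (inv_ne_zero hlam')
  have hinv : ⅟(lam'⁻¹) = lam' := by
    exact invOf_eq_right_inv (inv_mul_cancel₀ hlam')
  have hrefl : ∀ f : Polynomial ℤ, f.natDegree ≤ N →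
      Polynomial.aeval lam' (f.reflect N) * (lam'⁻¹) ^ N = Polynomial.aeval (lam'⁻¹) f := by
    intro f hf
    have := Polynomial.eval₂_reflect_mul_pow (algebraMap ℤ ℝ) (lam'⁻¹) N f hf
    rwa [hinv] at this
  refine ⟨px.reflect N, qy.reflect N, ?_, ?_⟩
  · intro h0
    have := hrefl qy (le_max_right _ _)
    rw [h0, zero_mul, hqy] at this
    exact hνy this.symm
  · have h1 := hrefl px (le_max_left _ _)
    have h2 := hrefl qy (le_max_right _ _)
    have hpow : (lam'⁻¹ : ℝ) ^ N ≠ 0 := pow_ne_zero _ (inv_ne_zero hlam')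
    have : lam * Polynomial.aeval lam' (qy.reflect N) * (lam'⁻¹)^N
        = Polynomial.aeval lam' (px.reflect N) * (lam'⁻¹)^N := by
      rw [mul_assoc, h2, hqy, hlnu, ← hpx, ← h1]
    exact mul_right_cancel₀ hpow this
end

section
/- Let λ, λ' ∈ ℝ be nonzero real algebraic integers (IsIntegral ℤ λ and IsIntegral ℤ λ'). Let G and G' be additive abelian groups, μ : G →+ ℝ and μ' : G' →+ ℝ additive homomorphisms, and h : G ≃+ G' an order isomorphism (for every z ∈ G, 0 ≤ μ z if and only if 0 ≤ μ' (h z)). Assume: (a) every value of μ lies in ℤ[1/λ] and every value of μ' lies in ℤ[1/λ']; (b) there exists x ∈ G with 0 < μ x; (c) the λ-shift property holds for (G, μ) and the λ'-shift property holds for (G', μ'). Then ℚ[λ] and ℚ[λ'] are identical as subsets of ℝ: Algebra.adjoin ℚ ({λ} : Set ℝ) = Algebra.adjoin ℚ ({λ'} : Set ℝ). (Lemma 6.) -/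
/-- If `x` is a nonzero algebraic number, every element of `ℤ[1/x]` lies in the
intermediate field `ℚ⟮x⟯`. -/
lemma aux_mem_adjoin_field (x : ℝ) (_hx : x ≠ 0) (z : ℝ)
    (hz : z ∈ Algebra.adjoin ℤ ({x⁻¹} : Set ℝ)) :
    z ∈ IntermediateField.adjoin ℚ ({x} : Set ℝ) := by
  have hxmem : x ∈ IntermediateField.adjoin ℚ ({x} : Set ℝ) :=
    IntermediateField.mem_adjoin_simple_self ℚ x
  induction hz using Algebra.adjoin_induction with
  | mem w hw =>
      rcases hw with rfl
      exact inv_mem hxmem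
  | algebraMap r =>
      simpa using intCast_mem (IntermediateField.adjoin ℚ ({x} : Set ℝ)) r
  | add w₁ w₂ _ _ h1 h2 => exact add_mem h1 h2
  | mul w₁ w₂ _ _ h1 h2 => exact mul_mem h1 h2

theorem stmt10 (lam lam' : ℝ) (hlam : lam ≠ 0) (hlam' : lam' ≠ 0)
    (hint : IsIntegral ℤ lam) (hint' : IsIntegral ℤ lam')
    {G G' : Type*} [AddCommGroup G] [AddCommGroup G']
    (μ : G →+ ℝ) (μ' : G' →+ ℝ) (h : G ≃+ G')
    (horder : ∀ z : G, 0 ≤ μ z ↔ 0 ≤ μ' (h z))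
    (ha : ∀ g : G, μ g ∈ Algebra.adjoin ℤ ({lam⁻¹} : Set ℝ))
    (ha' : ∀ g' : G', μ' g' ∈ Algebra.adjoin ℤ ({lam'⁻¹} : Set ℝ))
    (hb : ∃ x : G, 0 < μ x)
    (hc : ∀ x : G, ∃ y : G, lam * μ y = μ x)
    (hc' : ∀ x' : G', ∃ y' : G', lam' * μ' y' = μ' x') :
    Algebra.adjoin ℚ ({lam} : Set ℝ) = Algebra.adjoin ℚ ({lam'} : Set ℝ) := by
  obtain ⟨x0, hx0⟩ := hb
  set a := μ x0 with ha0
  set b := μ' (h x0) with hb0def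
  have hb0 : 0 < b := by
    by_contra hle
    push_neg at hle
    rw [hb0def] at hle
    have h2 : (0:ℝ) ≤ μ (-x0) := (horder (-x0)).mpr (by rw [map_neg, map_neg]; linarith)
    rw [map_neg] at h2
    linarith
  -- proportionality:  μ'(h z) * a = b * μ z for all z
  have key : ∀ z : G, μ' (h z) * a = b * μ z := by
    intro z
    have hmono : ∀ (p n : ℤ), (0:ℝ) < n * μ z - p * a → (0:ℝ) ≤ n * μ' (h z) - p * b := by
      intro p n hpos
      have h1 : (0:ℝ) ≤ μ (n • z - p • x0) := by
        simp only [map_sub, map_zsmul, zsmul_eq_mul]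
        linarith
      have h2 := (horder _).mp h1
      simp only [map_sub, map_zsmul, zsmul_eq_mul] at h2
      linarith [hb0def]
    by_contra hne
    rcases lt_or_gt_of_ne hne with hlt | hgt
    · have h1 : μ' (h z) / b < μ z / a := by
        rw [div_lt_div_iff₀ hb0 hx0]; linarith
      obtain ⟨q, hq1, hq2⟩ := exists_rat_btwn h1
      rw [Rat.cast_def] at hq1 hq2
      have hden : (0:ℝ) < (q.den : ℝ) := by exact_mod_cast q.pos
      rw [div_lt_div_iff₀ hb0 hden] at hq1
      rw [div_lt_div_iff₀ hden hx0] at hq2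
      have := hmono q.num (q.den : ℤ) (by push_cast; linarith)
      push_cast at this
      linarith
    · have h1 : μ z / a < μ' (h z) / b := by
        rw [div_lt_div_iff₀ hx0 hb0]; linarith
      obtain ⟨q, hq1, hq2⟩ := exists_rat_btwn h1
      rw [Rat.cast_def] at hq1 hq2
      have hden : (0:ℝ) < (q.den : ℝ) := by exact_mod_cast q.pos
      rw [div_lt_div_iff₀ hx0 hden] at hq1
      rw [div_lt_div_iff₀ hden hb0] at hq2
      have := hmono (-q.num) (-(q.den : ℤ)) (by push_cast; linarith)
      push_cast at this
      linarith
  have hane := ne_of_gt hx0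
  have hbne := ne_of_gt hb0
  -- a / lam' ∈ ℤ[1/lam]
  have hmem1 : a / lam' ∈ Algebra.adjoin ℤ ({lam⁻¹} : Set ℝ) := by
    obtain ⟨y', hy'⟩ := hc' (h x0)
    have hk := key (h.symm y')
    rw [h.apply_symm_apply] at hk
    have : μ (h.symm y') = a / lam' := by
      have hy'' : μ' y' = b / lam' := by
        field_simp
        linarith [hy']
      rw [hy''] at hk
      field_simp at hk ⊢
      nlinarith [hk]
    rw [← this]; exact ha _
  -- b / lam ∈ ℤ[1/lam']
  have hmem2 : b / lam ∈ Algebra.adjoin ℤ ({lam'⁻¹} : Set ℝ) := by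
    obtain ⟨y, hy⟩ := hc x0
    have hk := key y
    have : μ' (h y) = b / lam := by
      have hyv : μ y = a / lam := by field_simp; linarith [hy]
      rw [hyv] at hk
      field_simp at hk ⊢
      nlinarith [hk]
    rw [← this]; exact ha' _
  -- pass through intermediate fields
  have hintQ : IsIntegral ℚ lam := hint.tower_top
  have hintQ' : IsIntegral ℚ lam' := hint'.tower_top
  have htrans : ∀ z : ℝ, z ∈ IntermediateField.adjoin ℚ ({lam} : Set ℝ) ↔
      z ∈ Algebra.adjoin ℚ ({lam} : Set ℝ) := by
    intro z
    rw [← IntermediateField.adjoin_simple_toSubalgebra_of_isAlgebraic hintQ.isAlgebraic]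
    rfl
  have htrans' : ∀ z : ℝ, z ∈ IntermediateField.adjoin ℚ ({lam'} : Set ℝ) ↔
      z ∈ Algebra.adjoin ℚ ({lam'} : Set ℝ) := by
    intro z
    rw [← IntermediateField.adjoin_simple_toSubalgebra_of_isAlgebraic hintQ'.isAlgebraic]
    rfl
  have hlam'mem : lam' ∈ Algebra.adjoin ℚ ({lam} : Set ℝ) := by
    rw [← htrans]
    have h1 : a ∈ IntermediateField.adjoin ℚ ({lam} : Set ℝ) :=
      aux_mem_adjoin_field lam hlam _ (ha x0)
    have h2 : a / lam' ∈ IntermediateField.adjoin ℚ ({lam} : Set ℝ) :=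
      aux_mem_adjoin_field lam hlam _ hmem1
    have h3 : a / (a / lam') ∈ IntermediateField.adjoin ℚ ({lam} : Set ℝ) :=
      div_mem h1 h2
    have : a / (a / lam') = lam' := by field_simp
    rwa [this] at h3
  have hlammem : lam ∈ Algebra.adjoin ℚ ({lam'} : Set ℝ) := by
    rw [← htrans']
    have h1 : b ∈ IntermediateField.adjoin ℚ ({lam'} : Set ℝ) :=
      aux_mem_adjoin_field lam' hlam' _ (ha' (h x0))
    have h2 : b / lam ∈ IntermediateField.adjoin ℚ ({lam'} : Set ℝ) :=
      aux_mem_adjoin_field lam' hlam' _ hmem2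
    have h3 : b / (b / lam) ∈ IntermediateField.adjoin ℚ ({lam'} : Set ℝ) :=
      div_mem h1 h2
    have : b / (b / lam) = lam := by field_simp
    rwa [this] at h3
  apply le_antisymm
  · exact Algebra.adjoin_le (Set.singleton_subset_iff.mpr hlammem)
  · exact Algebra.adjoin_le (Set.singleton_subset_iff.mpr hlam'mem)
end

section
/- Let N be an integer with 0 < N and set λ = (N : ℝ); let λ' ∈ ℝ be a positive real algebraic integer (IsIntegral ℤ λ'). Let G and G' be additive abelian groups, μ : G →+ ℝ and μ' : G' →+ ℝ additive homomorphisms, and h : G ≃+ G' an order isomorphism (for every z ∈ G, 0 ≤ μ z if and only if 0 ≤ μ' (h z)). Assume: (a) every value of μ lies in ℤ[1/λ] and every value of μ' lies in ℤ[1/λ']; (b) there exists x ∈ G with 0 < μ x; (c) the λ-shift property holds for (G, μ) and the λ'-shift property holds for (G', μ'); (d) 1 ∈ Set.range μ and 1 ∈ Set.range μ'. Then λ' is an integer (there exists M : ℤ with λ' = (M : ℝ)), and ℤ[1/λ] = ℤ[1/λ'] as subsets of ℝ: Algebra.adjoin ℤ ({λ⁻¹} : Set ℝ) = Algebra.adjoin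 ℤ ({λ'⁻¹} : Set ℝ). (Lemma 7.) -/
lemma adjoin_inv_int_form (n : ℤ) (hn : (n:ℝ) ≠ 0) {x : ℝ}
    (hx : x ∈ Algebra.adjoin ℤ ({((n:ℝ))⁻¹} : Set ℝ)) :
    ∃ (s : ℤ) (a : ℕ), x = (s:ℝ) * ((n:ℝ)⁻¹)^a := by
  induction hx using Algebra.adjoin_induction with
  | mem y hy =>
    rw [Set.mem_singleton_iff] at hy
    exact ⟨1, 1, by simp [hy]⟩
  | algebraMap r => exact ⟨r, 0, by simp⟩
  | add y z hy hz ihy ihz =>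
    obtain ⟨s₁, a₁, rfl⟩ := ihy
    obtain ⟨s₂, a₂, rfl⟩ := ihz
    refine ⟨s₁ * n^a₂ + s₂ * n^a₁, a₁ + a₂, ?_⟩
    have h1 : ((n:ℝ))^a₂ * ((n:ℝ)⁻¹)^a₂ = 1 := by
      rw [inv_pow, mul_inv_cancel₀ (pow_ne_zero _ hn)]
    have h2 : ((n:ℝ))^a₁ * ((n:ℝ)⁻¹)^a₁ = 1 := by
      rw [inv_pow, mul_inv_cancel₀ (pow_ne_zero _ hn)]
    push_cast
    linear_combination (-(s₁:ℝ) * ((n:ℝ)⁻¹)^a₁) * h1 + (-(s₂:ℝ) * ((n:ℝ)⁻¹)^a₂) * h2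
  | mul y z hy hz ihy ihz =>
    obtain ⟨s₁, a₁, rfl⟩ := ihy
    obtain ⟨s₂, a₂, rfl⟩ := ihz
    exact ⟨s₁ * s₂, a₁ + a₂, by push_cast; ring⟩

lemma int_of_rat_integral {q : ℚ} (h : IsIntegral ℤ ((q:ℝ))) : ∃ M : ℤ, (M:ℚ) = q := by
  have hq : IsIntegral ℤ q := by
    have : (algebraMap ℚ ℝ) q = (q:ℝ) := rfl
    exact IsIntegral.tower_bot_of_field (this ▸ h)
  obtain ⟨M, hM⟩ := IsIntegrallyClosed.isIntegral_iff.mp hq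
  exact ⟨M, hM⟩

theorem stmt11 (N : ℤ) (hN : 0 < N) (lam' : ℝ) (hlam' : 0 < lam')
    (hint' : IsIntegral ℤ lam')
    {G G' : Type*} [AddCommGroup G] [AddCommGroup G']
    (μ : G →+ ℝ) (μ' : G' →+ ℝ) (h : G ≃+ G')
    (horder : ∀ z : G, 0 ≤ μ z ↔ 0 ≤ μ' (h z))
    (ha : ∀ g : G, μ g ∈ Algebra.adjoin ℤ ({((N : ℝ))⁻¹} : Set ℝ))
    (ha' : ∀ g' : G', μ' g' ∈ Algebra.adjoin ℤ ({lam'⁻¹} : Set ℝ))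
    (hb : ∃ x : G, 0 < μ x)
    (hc : ∀ x : G, ∃ y : G, (N : ℝ) * μ y = μ x)
    (hc' : ∀ x' : G', ∃ y' : G', lam' * μ' y' = μ' x')
    (hd : (1 : ℝ) ∈ Set.range μ) (hd' : (1 : ℝ) ∈ Set.range μ') :
    (∃ M : ℤ, lam' = (M : ℝ)) ∧
      Algebra.adjoin ℤ ({((N : ℝ))⁻¹} : Set ℝ) =
        Algebra.adjoin ℤ ({lam'⁻¹} : Set ℝ) := by
  have hN0 : ((N:ℝ)) ≠ 0 := by positivity
  have hlam0 : lam' ≠ 0 := ne_of_gt hlam'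
  set ν : G →+ ℝ := μ'.comp h.toAddMonoidHom with hν
  have hνdef : ∀ z : G, ν z = μ' (h z) := fun z => rfl
  obtain ⟨x₀, hx₀⟩ := hb
  -- sign equivalences
  have hsign : ∀ z : G, 0 ≤ μ z ↔ 0 ≤ ν z := fun z => horder z
  have hsign' : ∀ z : G, 0 < μ z ↔ 0 < ν z := by
    intro z
    have hge : μ z ≤ 0 ↔ ν z ≤ 0 := by
      have := hsign (-z)
      simpa [neg_nonneg] using this
    simp only [← not_le, hge]
  have hνx₀ : 0 < ν x₀ := (hsign' x₀).mp hx₀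
  -- proportionality
  have hprop : ∀ z : G, ν z * μ x₀ = μ z * ν x₀ := by
    intro z
    have key : ∀ a b : ℤ, ((a:ℝ)) * μ x₀ ≤ (b:ℝ) * μ z ↔ ((a:ℝ)) * ν x₀ ≤ (b:ℝ) * ν z := by
      intro a b
      have e1 : μ (b • z - a • x₀) = (b:ℝ) * μ z - (a:ℝ) * μ x₀ := by
        rw [map_sub, map_zsmul, map_zsmul, zsmul_eq_mul, zsmul_eq_mul]
      have e2 : ν (b • z - a • x₀) = (b:ℝ) * ν z - (a:ℝ) * ν x₀ := by
        rw [map_sub, map_zsmul, map_zsmul, zsmul_eq_mul, zsmul_eq_mul]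
      constructor
      · intro hab
        have := (hsign _).mp (by rw [e1]; linarith)
        rw [e2] at this; linarith
      · intro hab
        have := (hsign _).mpr (by rw [e2]; linarith)
        rw [e1] at this; linarith
    have hdiv : μ z / μ x₀ = ν z / ν x₀ := by
      by_contra hne
      rcases lt_or_gt_of_ne hne with hlt | hlt
      · obtain ⟨q, hq1, hq2⟩ := exists_rat_btwn hlt
        have hqd : (0:ℝ) < (q.den : ℝ) := by positivity
        have h1 : (q.num : ℝ) * μ x₀ > (q.den : ℝ) * μ z := by
          have : μ z / μ x₀ < (q.num : ℝ) / (q.den : ℝ) := by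
            rwa [← Rat.cast_def]
          rw [div_lt_div_iff₀ hx₀ hqd] at this
          linarith
        have h2 : (q.num : ℝ) * ν x₀ ≤ (q.den : ℝ) * ν z := by
          have : (q.num : ℝ) / (q.den : ℝ) < ν z / ν x₀ := by
            rwa [← Rat.cast_def]
          rw [div_lt_div_iff₀ hqd hνx₀] at this
          linarith
        have := (key q.num q.den).mpr h2
        push_cast at this
        linarith
      · obtain ⟨q, hq1, hq2⟩ := exists_rat_btwn hlt
        have hqd : (0:ℝ) < (q.den : ℝ) := by positivity
        have h1 : (q.num : ℝ) * ν x₀ > (q.den : ℝ) * ν z := by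
          have : ν z / ν x₀ < (q.num : ℝ) / (q.den : ℝ) := by
            rwa [← Rat.cast_def]
          rw [div_lt_div_iff₀ hνx₀ hqd] at this
          linarith
        have h2 : (q.num : ℝ) * μ x₀ ≤ (q.den : ℝ) * μ z := by
          have : (q.num : ℝ) / (q.den : ℝ) < μ z / μ x₀ := by
            rwa [← Rat.cast_def]
          rw [div_lt_div_iff₀ hqd hx₀] at this
          linarith
        have := (key q.num q.den).mp h2
        push_cast at this
        linarith
    rw [div_eq_div_iff (ne_of_gt hx₀) (ne_of_gt hνx₀)] at hdiv
    linarith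
  set c : ℝ := ν x₀ / μ x₀ with hcdef
  have hc0 : 0 < c := div_pos hνx₀ hx₀
  have hcne : c ≠ 0 := ne_of_gt hc0
  have hνc : ∀ z : G, ν z = c * μ z := by
    intro z
    rw [hcdef, div_mul_eq_mul_div, mul_comm (ν x₀) (μ z), ← hprop,
      mul_div_assoc, div_self (ne_of_gt hx₀), mul_one]
  -- sequences
  obtain ⟨x₁, hx₁⟩ := hd
  obtain ⟨x₁', hx₁'⟩ := hd'
  have hseq : ∀ k : ℕ, ∃ y : G, μ y = ((N:ℝ)⁻¹)^k := by
    intro k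
    induction k with
    | zero => exact ⟨x₁, by simpa using hx₁⟩
    | succ k ih =>
      obtain ⟨y, hy⟩ := ih
      obtain ⟨y', hy'⟩ := hc y
      refine ⟨y', ?_⟩
      rw [pow_succ, ← hy, ← hy']
      field_simp
  have hseq' : ∀ k : ℕ, ∃ y' : G', μ' y' = (lam'⁻¹)^k := by
    intro k
    induction k with
    | zero => exact ⟨x₁', by simpa using hx₁'⟩
    | succ k ih =>
      obtain ⟨y, hy⟩ := ih
      obtain ⟨y', hy'⟩ := hc' y
      refine ⟨y', ?_⟩
      rw [pow_succ, ← hy, ← hy']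
      field_simp
  -- fact I : c * N⁻ᵏ ∈ ℤ[1/lam']
  have factI : ∀ k : ℕ, c * ((N:ℝ)⁻¹)^k ∈ Algebra.adjoin ℤ ({lam'⁻¹} : Set ℝ) := by
    intro k
    obtain ⟨y, hy⟩ := hseq k
    have : c * ((N:ℝ)⁻¹)^k = μ' (h y) := by rw [← hνdef, hνc, hy]
    rw [this]; exact ha' _
  -- fact II : lam'⁻ᵏ / c ∈ ℤ[1/N]
  have factII : ∀ k : ℕ, (lam'⁻¹)^k / c ∈ Algebra.adjoin ℤ ({((N:ℝ))⁻¹} : Set ℝ) := by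
    intro k
    obtain ⟨y', hy'⟩ := hseq' k
    have h1 : ν (h.symm y') = (lam'⁻¹)^k := by rw [hνdef, h.apply_symm_apply, hy']
    have h2 : μ (h.symm y') = (lam'⁻¹)^k / c := by
      rw [eq_div_iff hcne, ← h1, hνc]; ring
    rw [← h2]; exact ha _
  -- extract forms
  obtain ⟨s₀, a₀, hs₀⟩ := adjoin_inv_int_form N hN0 (by simpa using factII 0)
  obtain ⟨s₁, a₁, hs₁⟩ := adjoin_inv_int_form N hN0 (by simpa using factII 1)
  have hs₀ne : (s₀:ℝ) ≠ 0 := by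
    intro hcon
    rw [hcon, zero_mul] at hs₀
    exact (one_div_ne_zero hcne) (by simpa using hs₀)
  -- lam' is rational
  have hs₀' : 1 / c = (s₀:ℝ) * ((N:ℝ)⁻¹)^a₀ := by simpa using hs₀
  have hs₁' : lam'⁻¹ / c = (s₁:ℝ) * ((N:ℝ)⁻¹)^a₁ := by simpa using hs₁
  set q : ℚ := (s₀ * N^a₁) / (s₁ * N^a₀) with hqdef
  have hlaminv : lam'⁻¹ = (s₁:ℝ) * ((N:ℝ)⁻¹)^a₁ * c := by
    rw [← hs₁']; field_simp
  have hNp : ((N:ℝ))^a₀ ≠ 0 := pow_ne_zero _ hN0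
  have hc2 : ((N:ℝ))^a₀ = (s₀:ℝ) * c := by
    have h' := hs₀'
    rw [div_eq_iff hcne, inv_pow] at h'
    calc ((N:ℝ))^a₀ = ((N:ℝ))^a₀ * 1 := by ring
      _ = ((N:ℝ))^a₀ * ((s₀:ℝ) * (((N:ℝ))^a₀)⁻¹ * c) := by rw [← h']
      _ = (s₀:ℝ) * c * (((N:ℝ))^a₀ * (((N:ℝ))^a₀)⁻¹) := by ring
      _ = (s₀:ℝ) * c := by rw [mul_inv_cancel₀ hNp, mul_one]
  have hcval : c = ((N:ℝ))^a₀ / (s₀:ℝ) := by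
    rw [eq_div_iff hs₀ne]
    linarith [hc2]
  have hs₁ne : (s₁:ℝ) ≠ 0 := by
    intro hcon
    rw [hcon, zero_mul] at hs₁'
    exact (div_ne_zero (by positivity) hcne) hs₁'
  have hqlam : ((q:ℝ)) = lam' := by
    have hNpow0 : ((N:ℝ))^a₀ ≠ 0 := pow_ne_zero _ hN0
    have hNpow1 : ((N:ℝ))^a₁ ≠ 0 := pow_ne_zero _ hN0
    have hlam'eq : lam' = ((N:ℝ))^a₁ * (s₀:ℝ) / ((s₁:ℝ) * ((N:ℝ))^a₀) := by
      have h3 : lam'⁻¹ = (s₁:ℝ) * ((N:ℝ))^a₀ / (((N:ℝ))^a₁ * (s₀:ℝ)) := by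
        rw [hlaminv, hcval, inv_pow]; field_simp
      rw [← inv_inv lam', h3]
      rw [inv_div]
    rw [hlam'eq, hqdef]
    push_cast
    ring
  have hintq : ∃ M : ℤ, (M:ℚ) = q := int_of_rat_integral (hqlam ▸ hint')
  obtain ⟨M, hM⟩ := hintq
  have hMlam : lam' = ((M:ℝ)) := by
    rw [← hqlam, ← hM]; push_cast; ring
  have hM0 : ((M:ℝ)) ≠ 0 := by rw [← hMlam]; exact hlam0
  refine ⟨⟨M, hMlam⟩, ?_⟩
  -- ring equality
  apply le_antisymm
  · -- ℤ[1/N] ≤ ℤ[1/lam']; enough : N⁻¹ ∈ ℤ[1/lam']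
    apply Algebra.adjoin_le
    intro x hx
    rw [Set.mem_singleton_iff] at hx
    subst hx
    have key : ((N:ℝ))⁻¹ = s₀ • (c * ((N:ℝ)⁻¹)^(1 + a₀)) := by
      rw [zsmul_eq_mul, hcval, pow_add, inv_pow]
      field_simp
      ring_nf
      rw [inv_pow, mul_inv_cancel₀ hNp]
    rw [key]
    exact zsmul_mem (factI (1 + a₀)) s₀
  · -- ℤ[1/lam'] ≤ ℤ[1/N]
    apply Algebra.adjoin_le
    intro x hx
    rw [Set.mem_singleton_iff] at hx
    subst hx
    -- c ∈ ℤ[1/lam'] = ℤ[1/M]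
    have hfactI0 : c ∈ Algebra.adjoin ℤ ({((M:ℝ))⁻¹} : Set ℝ) := by
      have := factI 0
      rw [hMlam] at this
      simpa using this
    obtain ⟨t, b, htb⟩ := adjoin_inv_int_form M hM0 hfactI0
    have htne : (t:ℝ) ≠ 0 := by
      intro hcon
      rw [hcon, zero_mul] at htb
      exact hcne htb
    have key : lam'⁻¹ = t • ((lam'⁻¹)^(1 + b) / c) := by
      rw [zsmul_eq_mul, htb, hMlam, pow_add, inv_pow]
      field_simp
    rw [key]
    exact zsmul_mem (factII (1 + b)) t
end

section
/- Let A be an n × n real matrix and let λ ∈ ℝ with λ > 0 be a simple root of the characteristic polynomial of A such that every complex root z of the characteristic polynomial with z ≠ λ satisfies ‖z‖ < λ. Let w : Fin n → ℝ be a nonzero column vector with A *ᵥ w = λ • w, and let r : Fin n → ℝ be a row vector with r ᵥ* A = λ • r and r ⬝ᵥ w ≠ 0. Then for every v : Fin n → ℝ, the sequence l ↦ λ^(-l) • ((A^l) *ᵥ v) converges as l → ∞ to c • w, where c = (r ⬝ᵥ v)/(r ⬝ᵥ w). (The convergence claim in the proof of Lemma 1: since λ exceeds the modulus of all other eigenvalues,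 ‖λ^{-l}(φ*)^l v − c₀ w₀‖ → 0 with c₀ determined by the left Perron eigenvector.) -/
open Polynomial Matrix Filter

private lemma auxRec (a e : ℕ → ℝ) (c : ℝ) (hc0 : 0 ≤ c) (hc1 : c < 1)
    (ha : ∀ l, 0 ≤ a l) (hrec : ∀ l, a (l + 1) ≤ c * a l + e l)
    (he : Filter.Tendsto e Filter.atTop (nhds 0)) :
    Filter.Tendsto a Filter.atTop (nhds 0) := by
  rw [Metric.tendsto_atTop]
  intro δ hδ
  have h3 : 0 < δ / 3 := by linarith
  obtain ⟨L, hL⟩ := (Metric.tendsto_atTop.1 he) ((δ / 3) * (1 - c)) (by nlinarith)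
  have key : ∀ k, a (L + k) ≤ c ^ k * a L + δ / 3 := by
    intro k
    induction k with
    | zero => simp; linarith [ha L]
    | succ k ih =>
      have h1 := hrec (L + k)
      have h2 := hL (L + k) (Nat.le_add_right _ _)
      have h2' : e (L + k) ≤ δ / 3 * (1 - c) := by
        rw [Real.dist_eq, sub_zero] at h2
        have := abs_lt.1 h2
        linarith [this.2]
      have hck : (0:ℝ) ≤ c ^ k := pow_nonneg hc0 k
      calc a (L + (k + 1)) = a ((L + k) + 1) := by ring_nf
        _ ≤ c * a (L + k) + e (L + k) := h1
        _ ≤ c * (c ^ k * a L + δ / 3) + δ / 3 * (1 - c) := by nlinarith [ha (L + k)]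
        _ = c ^ (k + 1) * a L + δ / 3 := by ring
  have hpow : Filter.Tendsto (fun k : ℕ => c ^ k * a L) Filter.atTop (nhds 0) := by
    simpa using (tendsto_pow_atTop_nhds_zero_of_lt_one hc0 hc1).mul_const (a L)
  obtain ⟨K, hK⟩ := (Metric.tendsto_atTop.1 hpow) (δ / 3) h3
  refine ⟨L + K, fun m hm => ?_⟩
  have hmL : L + (m - L) = m := by omega
  have hKm : K ≤ m - L := by omega
  have h4 := key (m - L)
  have h5 := hK (m - L) hKm
  rw [Real.dist_eq, sub_zero] at h5
  have h6 : c ^ (m - L) * a L < δ / 3 := lt_of_abs_lt h5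
  rw [Real.dist_eq, sub_zero, abs_of_nonneg (ha m)]
  rw [hmL] at h4
  linarith

private lemma auxVecMulPow {n : ℕ} (M : Matrix (Fin n) (Fin n) ℂ) (lam : ℂ) (r : Fin n → ℂ)
    (hr : r ᵥ* M = lam • r) : ∀ k, r ᵥ* (M ^ k) = lam ^ k • r := by
  intro k
  induction k with
  | zero => simp [Matrix.vecMul_one]
  | succ k ih =>
    rw [pow_succ, ← Matrix.vecMul_vecMul, ih, Matrix.smul_vecMul, hr, smul_smul, pow_succ]

private lemma auxVecMulAeval {n : ℕ} (M : Matrix (Fin n) (Fin n) ℂ) (lam : ℂ) (r : Fin n → ℂ)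
    (hr : r ᵥ* M = lam • r) (p : Polynomial ℂ) :
    r ᵥ* (Polynomial.aeval M p) = Polynomial.eval lam p • r := by
  induction p using Polynomial.induction_on' with
  | add p q hp hq => rw [map_add, Matrix.vecMul_add, hp, hq, eval_add, add_smul]
  | monomial k c =>
    rw [aeval_monomial, Algebra.algebraMap_eq_smul_one, smul_one_mul]
    have hsm : r ᵥ* (c • M ^ k) = c • (r ᵥ* M ^ k) := by
      funext j
      simp only [Matrix.vecMul, dotProduct, Matrix.smul_apply, smul_eq_mul,
        Pi.smul_apply, Finset.mul_sum]
      exact Finset.sum_congr rfl (fun i _ => by ring)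
    rw [hsm, auxVecMulPow M lam r hr k, eval_monomial, smul_smul]

private lemma auxDecay {n : ℕ} (M : Matrix (Fin n) (Fin n) ℂ) (lam : ℝ) (hlam : 0 < lam) :
    ∀ s : Multiset ℂ, (∀ μ ∈ s, ‖μ‖ < lam) → ∀ z : Fin n → ℂ,
      (Polynomial.aeval M (s.map (fun μ => X - C μ)).prod).mulVec z = 0 →
      Filter.Tendsto (fun l : ℕ => ‖(M ^ l).mulVec z‖ / lam ^ l) Filter.atTop (nhds 0) := by
  intro s
  induction s using Multiset.induction with
  | empty =>
    intro _ z hz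
    simp only [Multiset.map_zero, Multiset.prod_zero, _root_.map_one, Matrix.one_mulVec] at hz
    rw [hz]
    simp only [Matrix.mulVec_zero, norm_zero, zero_div]
    exact tendsto_const_nhds
  | cons μ t ih =>
    intro hs z hz
    have hμ : ‖μ‖ < lam := hs μ (Multiset.mem_cons_self μ t)
    have ht : ∀ x ∈ t, ‖x‖ < lam := fun x hx => hs x (Multiset.mem_cons_of_mem hx)
    set z₁ := M.mulVec z - μ • z with hz₁def
    have haev : (Polynomial.aeval M (X - C μ)) = M - μ • 1 := by
      simp [map_sub, aeval_X, aeval_C, Algebra.algebraMap_eq_smul_one]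
    have hz₁ : (Polynomial.aeval M (t.map (fun μ => X - C μ)).prod).mulVec z₁ = 0 := by
      have h1 : z₁ = (M - μ • 1).mulVec z := by
        rw [hz₁def, Matrix.sub_mulVec, Matrix.smul_mulVec, Matrix.one_mulVec]
      rw [h1, ← haev, Matrix.mulVec_mulVec, ← _root_.map_mul, mul_comm]
      rw [Multiset.map_cons, Multiset.prod_cons] at hz
      exact hz
    have IH := ih ht z₁ hz₁
    have hlamne : lam ≠ 0 := ne_of_gt hlam
    apply auxRec _ (fun l => ‖(M ^ l).mulVec z₁‖ / lam ^ (l + 1)) (‖μ‖ / lam)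
      (div_nonneg (norm_nonneg μ) hlam.le) ((div_lt_one hlam).2 hμ)
      (fun l => div_nonneg (norm_nonneg _) (pow_nonneg hlam.le l))
    · intro l
      have hMz : (M ^ (l + 1)).mulVec z = μ • (M ^ l).mulVec z + (M ^ l).mulVec z₁ := by
        rw [pow_succ, ← Matrix.mulVec_mulVec]
        have h2 : M.mulVec z = μ • z + z₁ := by rw [hz₁def]; ring_nf
        rw [h2, Matrix.mulVec_add, Matrix.mulVec_smul]
      have hub : ‖(M ^ (l + 1)).mulVec z‖ ≤ ‖μ‖ * ‖(M ^ l).mulVec z‖ + ‖(M ^ l).mulVec z₁‖ := by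
        rw [hMz]
        refine le_trans (norm_add_le _ _) ?_
        rw [norm_smul]
      have hpowpos : (0:ℝ) < lam ^ (l + 1) := pow_pos hlam _
      calc ‖(M ^ (l + 1)).mulVec z‖ / lam ^ (l + 1)
          ≤ (‖μ‖ * ‖(M ^ l).mulVec z‖ + ‖(M ^ l).mulVec z₁‖) / lam ^ (l + 1) := by
            gcongr
        _ = ‖μ‖ / lam * (‖(M ^ l).mulVec z‖ / lam ^ l) + ‖(M ^ l).mulVec z₁‖ / lam ^ (l + 1) := by
            rw [pow_succ]
            ring
    · have heq : (fun l : ℕ => ‖(M ^ l).mulVec z₁‖ / lam ^ (l + 1))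
          = fun l : ℕ => (1 / lam) * (‖(M ^ l).mulVec z₁‖ / lam ^ l) := by
        funext l
        rw [pow_succ]
        ring
      rw [heq]
      simpa using IH.const_mul (1 / lam)

private lemma auxCharpolyShift {n : ℕ} (M : Matrix (Fin n) (Fin n) ℂ) (μ : ℂ) :
    (M - μ • 1).charpoly = M.charpoly.comp (X + C μ) := by
  have h1 : M.charpoly.comp (X + C μ) = Polynomial.compRingHom (X + C μ) M.charpoly := rfl
  rw [h1, Matrix.charpoly, Matrix.charpoly, RingHom.map_det]
  congr 1
  ext i j
  by_cases h : i = j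
  · subst h
    rw [RingHom.mapMatrix_apply, Matrix.map_apply, Matrix.charmatrix_apply_eq,
      Matrix.charmatrix_apply_eq]
    simp only [coe_compRingHom_apply, sub_comp, X_comp, C_comp, Matrix.sub_apply,
      Matrix.smul_apply, Matrix.one_apply_eq, smul_eq_mul, mul_one, C_sub]
    ring
  · rw [RingHom.mapMatrix_apply, Matrix.map_apply, Matrix.charmatrix_apply_ne _ _ _ h,
      Matrix.charmatrix_apply_ne _ _ _ h]
    simp only [coe_compRingHom_apply, neg_comp, C_comp, Matrix.sub_apply, Matrix.smul_apply,
      Matrix.one_apply_ne h, smul_eq_mul, mul_zero, sub_zero]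

private lemma auxRootMultComp (p : Polynomial ℂ) (μ : ℂ) (hp : p ≠ 0) :
    rootMultiplicity (0 : ℂ) (p.comp (X + C μ)) = rootMultiplicity μ p := by
  have hinv : ∀ q : Polynomial ℂ, (q.comp (X + C μ)).comp (X - C μ) = q := by
    intro q
    rw [comp_assoc]
    simp [add_comp, X_comp, C_comp, sub_comp]
  have hne : p.comp (X + C μ) ≠ 0 := fun h => hp (by rw [← hinv p, h, zero_comp])
  apply le_antisymm
  · rw [le_rootMultiplicity_iff hp]
    obtain ⟨t, ht⟩ := pow_rootMultiplicity_dvd (p.comp (X + C μ)) 0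
    refine ⟨t.comp (X - C μ), ?_⟩
    have h2 := congrArg (fun q => q.comp (X - C μ)) ht
    simp only [hinv p, mul_comp, pow_comp, sub_comp, X_comp, C_comp, map_zero, sub_zero] at h2
    exact h2
  · rw [le_rootMultiplicity_iff hne]
    obtain ⟨t, ht⟩ := pow_rootMultiplicity_dvd p μ
    refine ⟨t.comp (X + C μ), ?_⟩
    have h2 := congrArg (fun q => q.comp (X + C μ)) ht
    simp only [mul_comp, pow_comp, sub_comp, X_comp, C_comp, map_zero, sub_zero,
      add_sub_cancel_right] at h2
    simpa [map_zero, sub_zero] using h2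

private lemma auxEigenLine {n : ℕ} (M : Matrix (Fin n) (Fin n) ℂ) (lam : ℂ)
    (hmult : rootMultiplicity lam M.charpoly = 1)
    (x y : Fin n → ℂ) (hx : M.mulVec x = lam • x) (hy : M.mulVec y = lam • y) (hy0 : y ≠ 0) :
    ∃ c : ℂ, x = c • y := by
  set ψ : Module.End ℂ (Fin n → ℂ) := Matrix.toLin' (M - lam • 1) with hψ
  have hchar : LinearMap.charpoly ψ = (M - lam • 1).charpoly := by
    have h1 := LinearMap.charpoly_toMatrix ψ (Pi.basisFun ℂ (Fin n))
    rw [LinearMap.toMatrix_eq_toMatrix', LinearMap.toMatrix'_toLin'] at h1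
    exact h1.symm
  have hfin : Module.finrank ℂ (ψ.maxGenEigenspace 0) = 1 := by
    rw [LinearMap.finrank_maxGenEigenspace_zero_eq, hchar, ← rootMultiplicity_eq_natTrailingDegree',
      auxCharpolyShift, auxRootMultComp _ _ (Matrix.charpoly_monic M).ne_zero, hmult]
  have hmem : ∀ u : Fin n → ℂ, M.mulVec u = lam • u → u ∈ ψ.maxGenEigenspace 0 := by
    intro u hu
    rw [Module.End.mem_maxGenEigenspace]
    refine ⟨1, ?_⟩
    simp only [zero_smul, sub_zero, pow_one, hψ, Matrix.toLin'_apply]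
    rw [Matrix.sub_mulVec, Matrix.smul_mulVec, Matrix.one_mulVec, hu, sub_self]
  obtain ⟨v₀, hv₀⟩ := finrank_le_one_iff.1 hfin.le
  obtain ⟨cy, hcy⟩ := hv₀ ⟨y, hmem y hy⟩
  obtain ⟨cx, hcx⟩ := hv₀ ⟨x, hmem x hx⟩
  have hyv : cy • (v₀ : Fin n → ℂ) = y := congrArg Subtype.val hcy
  have hxv : cx • (v₀ : Fin n → ℂ) = x := congrArg Subtype.val hcx
  have hcy0 : cy ≠ 0 := by
    rintro rfl
    exact hy0 (by rw [← hyv, zero_smul])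
  refine ⟨cx / cy, ?_⟩
  rw [← hyv, ← hxv, smul_smul, div_mul_cancel₀ _ hcy0]

private lemma auxComplexMain {n : ℕ} (M : Matrix (Fin n) (Fin n) ℂ) (lam : ℝ) (hlam : 0 < lam)
    (hmult : rootMultiplicity (lam : ℂ) M.charpoly = 1)
    (hdom : ∀ z : ℂ, M.charpoly.IsRoot z → z ≠ (lam : ℂ) → ‖z‖ < lam)
    (w : Fin n → ℂ) (hw : M.mulVec w = (lam : ℂ) • w)
    (r : Fin n → ℂ) (hr : r ᵥ* M = (lam : ℂ) • r) (hrw : r ⬝ᵥ w ≠ 0)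
    (u : Fin n → ℂ) (hu : r ⬝ᵥ u = 0) :
    Filter.Tendsto (fun l : ℕ => ‖(M ^ l).mulVec u‖ / lam ^ l) Filter.atTop (nhds 0) := by
  have hp0 : M.charpoly ≠ 0 := (Matrix.charpoly_monic M).ne_zero
  have hfact : (X - C (lam : ℂ)) * (M.charpoly /ₘ (X - C (lam : ℂ))) = M.charpoly := by
    have h := pow_mul_divByMonic_rootMultiplicity_eq M.charpoly ((lam : ℂ))
    rwa [hmult, pow_one] at h
  have hqlam : Polynomial.eval ((lam : ℂ)) (M.charpoly /ₘ (X - C (lam : ℂ))) ≠ 0 := by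
    have h := eval_divByMonic_pow_rootMultiplicity_ne_zero ((lam : ℂ)) hp0
    rwa [hmult, pow_one] at h
  set q := M.charpoly /ₘ (X - C (lam : ℂ)) with hqdef
  set e := Polynomial.eval ((lam : ℂ)) q with hedef
  obtain ⟨d, hd⟩ := X_sub_C_dvd_sub_C_eval (a := (lam : ℂ)) (p := q)
  have hCe : C e⁻¹ * C e = 1 := by rw [← C_mul, inv_mul_cancel₀ hqlam, C_1]
  have hbez : (-(C e⁻¹ * d)) * (X - C (lam : ℂ)) + C e⁻¹ * q = 1 := by
    linear_combination (C e⁻¹) * hd + hCe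
  set x := (Polynomial.aeval M (C e⁻¹ * q)).mulVec u with hxdef
  have hux : u = x + (Polynomial.aeval M ((-(C e⁻¹ * d)) * (X - C (lam : ℂ)))).mulVec u := by
    have h1 := congrArg (fun p => Polynomial.aeval M p) hbez
    simp only [map_add, _root_.map_one] at h1
    have h2 : (Polynomial.aeval M ((-(C e⁻¹ * d)) * (X - C (lam : ℂ)))).mulVec u
        + (Polynomial.aeval M (C e⁻¹ * q)).mulVec u = u := by
      rw [← Matrix.add_mulVec, h1, Matrix.one_mulVec]
    rw [hxdef]
    conv_lhs => rw [← h2]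
    exact add_comm _ _
  have hx_eig : M.mulVec x = (lam : ℂ) • x := by
    have h1 : (Polynomial.aeval M (X - C (lam : ℂ))).mulVec x = 0 := by
      rw [hxdef, Matrix.mulVec_mulVec, ← _root_.map_mul]
      have h2 : (X - C (lam : ℂ)) * (C e⁻¹ * q) = C e⁻¹ * M.charpoly := by
        rw [← hfact]; ring
      rw [h2, _root_.map_mul, Matrix.aeval_self_charpoly, mul_zero, Matrix.zero_mulVec]
    have h2 : Polynomial.aeval M (X - C (lam : ℂ)) = M - (lam : ℂ) • 1 := by
      simp [map_sub, aeval_X, aeval_C, Algebra.algebraMap_eq_smul_one]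
    rw [h2, Matrix.sub_mulVec, Matrix.smul_mulVec, Matrix.one_mulVec, sub_eq_zero] at h1
    exact h1
  have hrx : r ⬝ᵥ x = 0 := by
    rw [hxdef, dotProduct_mulVec, auxVecMulAeval M _ r hr, smul_dotProduct, hu,
      smul_zero]
  have hw0 : w ≠ 0 := by
    rintro rfl
    exact hrw (dotProduct_zero r)
  have hx0 : x = 0 := by
    obtain ⟨c, hc⟩ := auxEigenLine M (lam : ℂ) hmult x w hx_eig hw hw0
    rw [hc, dotProduct_smul, smul_eq_mul] at hrx
    rcases mul_eq_zero.1 hrx with h | h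
    · rw [hc, h, zero_smul]
    · exact absurd h hrw
  have hqu : (Polynomial.aeval M q).mulVec u = 0 := by
    have huy : u = (Polynomial.aeval M ((-(C e⁻¹ * d)) * (X - C (lam : ℂ)))).mulVec u := by
      conv_lhs => rw [hux, hx0]
      rw [zero_add]
    rw [huy, Matrix.mulVec_mulVec, ← _root_.map_mul]
    have h2 : q * ((-(C e⁻¹ * d)) * (X - C (lam : ℂ))) = (-(C e⁻¹ * d)) * M.charpoly := by
      rw [← hfact]; ring
    rw [h2, _root_.map_mul, Matrix.aeval_self_charpoly, mul_zero, Matrix.zero_mulVec]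
  have hqmonic : q.Monic := by
    have h1 : ((X - C (lam : ℂ)) * q).leadingCoeff = 1 := by
      rw [hfact]; exact Matrix.charpoly_monic M
    rwa [leadingCoeff_mul, leadingCoeff_X_sub_C, one_mul] at h1
  have hqprod : q = (Multiset.map (fun a => X - C a) q.roots).prod :=
    (IsAlgClosed.splits q).eq_prod_roots_of_monic hqmonic
  apply auxDecay M lam hlam q.roots
  · intro μ hμ
    have hroot : q.IsRoot μ := isRoot_of_mem_roots hμ
    have hμlam : μ ≠ (lam : ℂ) := by
      rintro rfl
      exact hqlam hroot
    refine hdom μ ?_ hμlam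
    rw [IsRoot, ← hfact, eval_mul, hroot.eq_zero, mul_zero]
  · rw [← hqprod]; exact hqu

theorem stmt14 (n : ℕ) (A : Matrix (Fin n) (Fin n) ℝ) (lam : ℝ) (hlam : 0 < lam)
    (hsimple : (A.charpoly).rootMultiplicity lam = 1)
    (hdom : ∀ z : ℂ, ((A.map (Complex.ofReal : ℝ → ℂ)).charpoly).IsRoot z →
      z ≠ (lam : ℂ) → ‖z‖ < lam)
    (w : Fin n → ℝ) (hw0 : w ≠ 0) (hw : A.mulVec w = lam • w)
    (r : Fin n → ℝ) (hr : Matrix.vecMul r A = lam • r)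
    (hrw : dotProduct r w ≠ 0) (v : Fin n → ℝ) :
    Filter.Tendsto (fun l : ℕ => (lam ^ l)⁻¹ • ((A ^ l).mulVec v)) Filter.atTop
      (nhds ((dotProduct r v / dotProduct r w) • w)) := by
  classical
  set c : ℝ := dotProduct r v / dotProduct r w with hcdef
  set u : Fin n → ℝ := v - c • w with hudef
  have hru : dotProduct r u = 0 := by
    rw [hudef, dotProduct_sub, dotProduct_smul, smul_eq_mul, hcdef,
      div_mul_cancel₀ _ hrw, sub_self]
  -- complexification
  set M : Matrix (Fin n) (Fin n) ℂ := A.map (Complex.ofReal : ℝ → ℂ) with hMdef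
  have hmult : rootMultiplicity ((lam : ℂ)) M.charpoly = 1 := by
    have h2 := (Polynomial.eq_rootMultiplicity_map (p := A.charpoly) (f := Complex.ofRealHom)
      Complex.ofReal_injective lam).symm.trans hsimple
    have h3 : M.charpoly = Polynomial.map Complex.ofRealHom A.charpoly :=
      Matrix.charpoly_map A Complex.ofRealHom
    rw [h3]
    exact h2
  set wc : Fin n → ℂ := fun i => (w i : ℂ) with hwc
  set rc : Fin n → ℂ := fun i => (r i : ℂ) with hrc
  set uc : Fin n → ℂ := fun i => (u i : ℂ) with huc
  have hcast : ∀ (B : Matrix (Fin n) (Fin n) ℝ) (z : Fin n → ℝ) (i : Fin n),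
      ((B.map (Complex.ofReal : ℝ → ℂ)).mulVec (fun j => (z j : ℂ))) i = ((B.mulVec z) i : ℂ) := by
    intro B z i
    simp only [Matrix.mulVec, dotProduct, Matrix.map_apply]
    push_cast
    rfl
  have hwcM : M.mulVec wc = (lam : ℂ) • wc := by
    funext i
    rw [hMdef]
    show ((A.map _).mulVec (fun j => (w j : ℂ))) i = ((lam : ℂ) • wc) i
    rw [hcast A w i, hw]
    simp [hwc]
  have hrcM : rc ᵥ* M = (lam : ℂ) • rc := by
    funext j
    rw [hMdef]
    show ∑ i, (r i : ℂ) * ((A.map (Complex.ofReal : ℝ → ℂ)) i j) = ((lam : ℂ) • rc) j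
    have h1 : (Matrix.vecMul r A) j = lam * r j := by rw [hr]; simp
    simp only [Matrix.map_apply]
    push_cast
    have h2 : ∑ i, (r i : ℂ) * (A i j : ℂ) = ((∑ i, r i * A i j : ℝ) : ℂ) := by push_cast; rfl
    rw [h2]
    have h3 : (∑ i, r i * A i j) = lam * r j := by
      rw [← h1]; rfl
    rw [h3]
    simp [hrc]
  have hrcwc : rc ⬝ᵥ wc ≠ 0 := by
    have h1 : rc ⬝ᵥ wc = ((dotProduct r w : ℝ) : ℂ) := by
      simp only [dotProduct, hrc, hwc]
      push_cast
      rfl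
    rw [h1]
    exact_mod_cast hrw
  have hrcuc : rc ⬝ᵥ uc = 0 := by
    have h1 : rc ⬝ᵥ uc = ((dotProduct r u : ℝ) : ℂ) := by
      simp only [dotProduct, hrc, huc]
      push_cast
      rfl
    rw [h1, hru, Complex.ofReal_zero]
  have hdecayC := auxComplexMain M lam hlam hmult hdom wc hwcM rc hrcM hrcwc uc hrcuc
  -- transfer back to ℝ
  have hpowcast : ∀ (l : ℕ) (i : Fin n), ((M ^ l).mulVec uc) i = (((A ^ l).mulVec u) i : ℂ) := by
    intro l i
    have h1 : M ^ l = (A ^ l).map (Complex.ofReal : ℝ → ℂ) := by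
      rw [hMdef]
      induction l with
      | zero => simp [Matrix.map_one]
      | succ l ih =>
        rw [pow_succ, pow_succ, ih]
        exact (Matrix.map_mul (L := A ^ l) (M := A) (f := Complex.ofRealHom)).symm
    rw [h1]
    exact hcast (A ^ l) u i
  have hdecayR : ∀ i : Fin n, Filter.Tendsto (fun l : ℕ => (lam ^ l)⁻¹ * (((A ^ l).mulVec u) i))
      Filter.atTop (nhds 0) := by
    intro i
    apply squeeze_zero_norm _ hdecayC
    intro l
    have h1 : ‖(lam ^ l)⁻¹ * (((A ^ l).mulVec u) i)‖ = ‖(((A ^ l).mulVec u) i : ℂ)‖ / lam ^ l := by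
      rw [norm_mul, Complex.norm_real]
      rw [norm_inv, Real.norm_of_nonneg (pow_nonneg hlam.le l)]
      rw [inv_mul_eq_div, Real.norm_eq_abs]
    rw [h1, ← hpowcast l i]
    gcongr
    exact norm_le_pi_norm _ i
  have hAlw : ∀ l : ℕ, (A ^ l).mulVec w = (lam ^ l) • w := by
    intro l
    induction l with
    | zero => simp [Matrix.one_mulVec]
    | succ l ih =>
      rw [pow_succ, ← Matrix.mulVec_mulVec, hw, Matrix.mulVec_smul, ih, smul_smul, pow_succ]
      ring_nf
  have h1 : v = c • w + u := by rw [hudef]; abel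
  rw [tendsto_pi_nhds]
  intro i
  have hkey : ∀ l : ℕ, ((lam ^ l)⁻¹ • ((A ^ l).mulVec v)) i
      = c * w i + (lam ^ l)⁻¹ * (((A ^ l).mulVec u) i) := by
    intro l
    have hl0 : (lam : ℝ) ^ l ≠ 0 := (pow_pos hlam l).ne'
    have h2 : (A ^ l).mulVec v i = c * ((lam ^ l) * w i) + (A ^ l).mulVec u i := by
      calc (A ^ l).mulVec v i = (A ^ l).mulVec (c • w + u) i := by rw [← h1]
        _ = c * ((lam ^ l) * w i) + (A ^ l).mulVec u i := by
            rw [Matrix.mulVec_add, Matrix.mulVec_smul, hAlw l]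
            simp [smul_smul, mul_assoc]
    simp only [Pi.smul_apply, smul_eq_mul]
    rw [h2]
    field_simp
  have hlim := (hdecayR i).const_add (c * w i)
  simp only [add_zero] at hlim
  have hgoal : ((dotProduct r v / dotProduct r w) • w) i = c * w i := rfl
  rw [hgoal]
  exact hlim.congr (fun l => (hkey l).symm)
end
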